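/- arXiv:2304.11927 — 7 statements merged into one kernel-verified Lean document; each statement's English description precedes it below -/
import Mathlib

section
/- Let φ be an ABMV rule satisfying the Chernoff property. Let (C, V) be an election, let k ≤ |C|, and let J ⊆ C be nonempty such that some winning k-committee w ∈ φ(C, V, k) satisfies w ∩ J ≠ ∅. Then for every set C' ⊆ C ∖ J with |C ∖ C'| ≥ k, there exists a winning k-committee w' ∈ φ(C ∖ C', V_{C∖C'}, k) with w ∩ J ⊆ w'; in particular w' ∩ J ≠ ∅. (Thus every rule satisfying the Chernoff property is immune to destructive control by deleting candidates.) -/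
open Finset

attribute [local instance] Classical.propDecidable

universe u

variable {α : Type u}

/-- The Thiele ω-score of a committee `w` in the election with votes `V`. -/
noncomputable def thieleScore [DecidableEq α] (ω : ℕ → ℝ) (V : Multiset (Finset α))
    (w : Finset α) : ℝ :=
  (V.map fun v => ω (v ∩ w).card).sum

/-- The ω margin contribution of candidate `c` to committee `w`. -/
noncomputable def marginContrib [DecidableEq α] (ω : ℕ → ℝ) (V : Multiset (Finset α))
    (w : Finset α) (c : α) : ℝ :=
  thieleScore ω V (insert c w) - thieleScore ω V w

/-- Candidates of `C \ w` whose ω margin contribution to `w` is maximum. -/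
noncomputable def maxMarginSet [DecidableEq α] (ω : ℕ → ℝ) (V : Multiset (Finset α))
    (C w : Finset α) : Finset α :=
  (C \ w).filter fun c => ∀ c' ∈ C \ w, marginContrib ω V w c' ≤ marginContrib ω V w c

/-- Among the maximizers, the candidate(s) earliest in the tie-breaking order `pri`
(the order with `a ⊳ b` iff `pri a < pri b`). -/
noncomputable def seqNext [DecidableEq α] (ω : ℕ → ℝ) (pri : α → ℕ) (V : Multiset (Finset α))
    (C w : Finset α) : Finset α :=
  (maxMarginSet ω V C w).filter fun c => ∀ c' ∈ maxMarginSet ω V C w, pri c ≤ pri c'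

/-- The winning `k`-committee of the sequential ω-Thiele rule with tie-breaking order `pri`:
starting from `∅`, repeatedly add the candidate with maximum ω margin contribution,
breaking ties in favor of the candidate earliest in the order. -/
noncomputable def seqCommittee [DecidableEq α] (ω : ℕ → ℝ) (pri : α → ℕ)
    (V : Multiset (Finset α)) (C : Finset α) : ℕ → Finset α
  | 0 => ∅
  | k + 1 => seqCommittee ω pri V C k ∪ seqNext ω pri V C (seqCommittee ω pri V C k)

/-- The AV score of a committee. -/
noncomputable def avScore [DecidableEq α] (V : Multiset (Finset α)) (w : Finset α) : ℕ :=
  (V.map fun v => (v ∩ w).card).sum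

/-- AV winning `k`-committees: the `k`-subsets of `C` of maximum AV score. -/
noncomputable def avWinners [DecidableEq α] (C : Finset α) (V : Multiset (Finset α)) (k : ℕ) :
    Finset (Finset α) :=
  (C.powersetCard k).filter fun w => ∀ w' ∈ C.powersetCard k, avScore V w' ≤ avScore V w

/-- The SAV score of a committee. -/
noncomputable def savScore [DecidableEq α] (V : Multiset (Finset α)) (w : Finset α) : ℝ :=
  (V.map fun v => ((w ∩ v).card : ℝ) / (v.card : ℝ)).sum

/-- SAV winning `k`-committees: the `k`-subsets of `C` of maximum SAV score. -/
noncomputable def savWinners [DecidableEq α] (C : Finset α) (V : Multiset (Finset α)) (k : ℕ) :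
    Finset (Finset α) :=
  (C.powersetCard k).filter fun w => ∀ w' ∈ C.powersetCard k, savScore V w' ≤ savScore V w

/-- The NSAV score of a committee (with respect to candidate set `C`). -/
noncomputable def nsavScore [DecidableEq α] (C : Finset α) (V : Multiset (Finset α))
    (w : Finset α) : ℝ :=
  (V.map fun v => ((w ∩ v).card : ℝ) / (v.card : ℝ)).sum
    - (V.map fun v => ((w \ v).card : ℝ) / ((C \ v).card : ℝ)).sum

/-- The PAV score of a committee. -/
noncomputable def pavScore [DecidableEq α] (V : Multiset (Finset α)) (w : Finset α) : ℝ :=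
  (V.map fun v => ∑ i ∈ Finset.range (v ∩ w).card, (1 : ℝ) / (i + 1)).sum

/-- PAV winning `k`-committees: the `k`-subsets of `C` of maximum PAV score. -/
noncomputable def pavWinners [DecidableEq α] (C : Finset α) (V : Multiset (Finset α)) (k : ℕ) :
    Finset (Finset α) :=
  (C.powersetCard k).filter fun w => ∀ w' ∈ C.powersetCard k, pavScore V w' ≤ pavScore V w

/-- The ABCCV score of a committee: the number of votes approving at least one member. -/
noncomputable def abccvScore [DecidableEq α] (V : Multiset (Finset α)) (w : Finset α) : ℕ :=
  Multiset.card (V.filter fun v => (v ∩ w).Nonempty)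

/-- ABCCV winning `k`-committees: the `k`-subsets of `C` of maximum ABCCV score. -/
noncomputable def abccvWinners [DecidableEq α] (C : Finset α) (V : Multiset (Finset α)) (k : ℕ) :
    Finset (Finset α) :=
  (C.powersetCard k).filter fun w => ∀ w' ∈ C.powersetCard k, abccvScore V w' ≤ abccvScore V w

/-- The MAV score of a committee: the maximum Hamming distance to a vote. -/
noncomputable def mavScore [DecidableEq α] (V : Multiset (Finset α)) (w : Finset α) : ℕ :=
  (V.map fun v => (w \ v).card + (v \ w).card).sup

/-- MAV winning `k`-committees: the `k`-subsets of `C` of minimum MAV score. -/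
noncomputable def mavWinners [DecidableEq α] (C : Finset α) (V : Multiset (Finset α)) (k : ℕ) :
    Finset (Finset α) :=
  (C.powersetCard k).filter fun w => ∀ w' ∈ C.powersetCard k, mavScore V w ≤ mavScore V w'

/-- Every ABMV rule satisfying the Chernoff property is immune to
destructive control by deleting candidates. -/
theorem chernoff_immune_dcdc {α : Type u} [DecidableEq α]
    (φ : Finset α → Multiset (Finset α) → ℕ → Finset (Finset α))
    (hrule : ∀ (C : Finset α) (V : Multiset (Finset α)) (k : ℕ), k ≤ C.card →
      (φ C V k).Nonempty ∧ ∀ w ∈ φ C V k, w ⊆ C ∧ w.card = k)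
    (hchernoff : ∀ (C : Finset α) (V : Multiset (Finset α)) (k : ℕ) (C' : Finset α),
      C' ⊆ C → k ≤ C'.card →
      ∀ w ∈ φ C V k, ∃ w' ∈ φ C' (V.map (· ∩ C')) k, w ∩ C' ⊆ w')
    (C : Finset α) (V : Multiset (Finset α)) (k : ℕ) (hk : k ≤ C.card)
    (J : Finset α) (hJC : J ⊆ C) (hJ : J.Nonempty)
    (w : Finset α) (hw : w ∈ φ C V k) (hwJ : (w ∩ J).Nonempty) :
    ∀ C' ⊆ C \ J, k ≤ (C \ C').card →
      ∃ w' ∈ φ (C \ C') (V.map (· ∩ (C \ C'))) k, w ∩ J ⊆ w' ∧ (w' ∩ J).Nonempty := by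
  intro C' hC' hcard
  obtain ⟨w', hw', hsub⟩ := hchernoff C V k (C \ C') (sdiff_subset) hcard w hw
  have key : w ∩ J ⊆ w' := by
    intro x hx
    apply hsub
    simp only [mem_inter, mem_sdiff] at hx ⊢
    refine ⟨hx.1, hJC hx.2, fun hxC' => ?_⟩
    exact (mem_sdiff.mp (hC' hxC')).2 hx.2
  refine ⟨w', hw', key, ?_⟩
  obtain ⟨x, hx⟩ := hwJ
  exact ⟨x, mem_inter.mpr ⟨key hx, (mem_inter.mp hx).2⟩⟩
end

section
/- The approval voting rule AV satisfies the Chernoff property: for every election (C, V), every k ≤ |C|, and every C' ⊆ C with |C'| ≥ k, for every AV winning k-committee w of (C, V) there exists an AV winning k-committee w' of (C', V_{C'}) with w ∩ C' ⊆ w'. -/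
open Finset

attribute [local instance] Classical.propDecidable

universe u

variable {α : Type u}

/-- Number of votes approving `c`. -/
noncomputable def appr [DecidableEq α] (V : Multiset (Finset α)) (c : α) : ℕ :=
  Multiset.card (V.filter fun v => c ∈ v)

lemma avScore_eq_sum [DecidableEq α] (V : Multiset (Finset α)) (s : Finset α) :
    avScore V s = ∑ c ∈ s, appr V c := by
  induction V using Multiset.induction with
  | empty => simp [avScore, appr]
  | cons v V ih =>
    have h1 : avScore (v ::ₘ V) s = (v ∩ s).card + avScore V s := by
      simp [avScore]
    have h2 : ∀ c, appr (v ::ₘ V) c = (if c ∈ v then 1 else 0) + appr V c := by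
      intro c
      simp [appr, Multiset.filter_cons]
      split <;> simp
    have h3 : (v ∩ s).card = ∑ c ∈ s, (if c ∈ v then 1 else 0) := by
      rw [Finset.inter_comm, ← Finset.filter_mem_eq_inter, Finset.card_filter]
    rw [h1, ih, h3]
    simp only [h2, Finset.sum_add_distrib]

lemma avScore_restrict [DecidableEq α] (V : Multiset (Finset α)) (C' s : Finset α)
    (hs : s ⊆ C') : avScore (V.map (· ∩ C')) s = avScore V s := by
  unfold avScore
  rw [Multiset.map_map]
  congr 1
  apply Multiset.map_congr rfl
  intro v _
  simp only [Function.comp]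
  rw [Finset.inter_assoc, Finset.inter_eq_right.mpr hs]

lemma sum_le_sum_of_card_eq [DecidableEq α] {s t : Finset α} (f : α → ℕ)
    (hcard : s.card = t.card) (h : ∀ c ∈ s, ∀ d ∈ t, f c ≤ f d) :
    ∑ c ∈ s, f c ≤ ∑ d ∈ t, f d := by
  rcases s.eq_empty_or_nonempty with rfl | hs
  · simp
  · have ht : t.Nonempty := Finset.card_pos.mp (hcard ▸ Finset.card_pos.mpr hs)
    obtain ⟨d0, hd0, hmin⟩ := t.exists_min_image f ht
    calc ∑ c ∈ s, f c ≤ ∑ _c ∈ s, f d0 :=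
          Finset.sum_le_sum (fun c hc => h c hc d0 hd0)
      _ = s.card * f d0 := by simp [Finset.sum_const, mul_comm]
      _ = t.card * f d0 := by rw [hcard]
      _ = ∑ _d ∈ t, f d0 := by simp [Finset.sum_const, mul_comm]
      _ ≤ ∑ d ∈ t, f d := Finset.sum_le_sum (fun d hd => hmin d hd)

/-- Swapping `d ∈ s` for `c ∉ s` in an optimal committee shows `appr c ≤ appr d`. -/
lemma appr_le_of_opt [DecidableEq α] {C : Finset α} {V : Multiset (Finset α)} {k : ℕ}
    {s : Finset α} (hsC : s ⊆ C) (hscard : s.card = k)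
    (hopt : ∀ u ∈ C.powersetCard k, avScore V u ≤ avScore V s)
    {c d : α} (hcC : c ∈ C) (hcs : c ∉ s) (hds : d ∈ s) :
    appr V c ≤ appr V d := by
  have hcd : c ≠ d := fun h => hcs (h ▸ hds)
  set u : Finset α := insert c (s.erase d) with hu
  have hcerase : c ∉ s.erase d := fun h => hcs (Finset.mem_of_mem_erase h)
  have huC : u ⊆ C := by
    intro x hx
    rcases Finset.mem_insert.mp hx with rfl | hx
    · exact hcC
    · exact hsC (Finset.mem_of_mem_erase hx)
  have hucard : u.card = k := by
    have h1 : 1 ≤ k := hscard ▸ Finset.card_pos.mpr ⟨d, hds⟩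
    rw [hu, Finset.card_insert_of_notMem hcerase, Finset.card_erase_of_mem hds, hscard]
    omega
  have hle : avScore V u ≤ avScore V s :=
    hopt u (Finset.mem_powersetCard.mpr ⟨huC, hucard⟩)
  rw [avScore_eq_sum, avScore_eq_sum, hu, Finset.sum_insert hcerase,
    ← Finset.add_sum_erase s (appr V) hds] at hle
  exact Nat.le_of_add_le_add_right hle

/-- The approval voting rule AV satisfies the Chernoff property. -/
theorem av_chernoff {α : Type u} [DecidableEq α]
    (C : Finset α) (V : Multiset (Finset α)) (hV : ∀ v ∈ V, v ⊆ C)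
    (k : ℕ) (hk : k ≤ C.card)
    (C' : Finset α) (hC'sub : C' ⊆ C) (hkC' : k ≤ C'.card) :
    ∀ w ∈ avWinners C V k, ∃ w' ∈ avWinners C' (V.map (· ∩ C')) k, w ∩ C' ⊆ w' := by
  intro w hw
  rw [avWinners, Finset.mem_filter, Finset.mem_powersetCard] at hw
  obtain ⟨⟨hwC, hwcard⟩, hwopt⟩ := hw
  set A : Finset α := w ∩ C' with hA
  have hAC' : A ⊆ C' := Finset.inter_subset_right
  have hAcard : A.card ≤ k := hwcard ▸ Finset.card_le_card Finset.inter_subset_left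
  obtain ⟨w0, hAw0, hw0C', hw0card⟩ := Finset.exists_subsuperset_card_eq hAC' hAcard hkC'
  set S : Finset (Finset α) := (C'.powersetCard k).filter fun u => A ⊆ u with hS
  have hw0S : w0 ∈ S := by
    rw [hS, Finset.mem_filter, Finset.mem_powersetCard]
    exact ⟨⟨hw0C', hw0card⟩, hAw0⟩
  obtain ⟨w', hw'S, hw'max⟩ := S.exists_max_image (avScore V) ⟨w0, hw0S⟩
  rw [hS, Finset.mem_filter, Finset.mem_powersetCard] at hw'S
  obtain ⟨⟨hw'C', hw'card⟩, hAw'⟩ := hw'S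
  refine ⟨w', ?_, hAw'⟩
  rw [avWinners, Finset.mem_filter, Finset.mem_powersetCard]
  refine ⟨⟨hw'C', hw'card⟩, ?_⟩
  intro u hu
  rw [Finset.mem_powersetCard] at hu
  obtain ⟨huC', hucard⟩ := hu
  rw [avScore_restrict V C' u huC', avScore_restrict V C' w' hw'C']
  -- pointwise comparison on the exchange sets
  have hpt : ∀ c ∈ u \ w', ∀ d ∈ w' \ u, appr V c ≤ appr V d := by
    intro c hc d hd
    rw [Finset.mem_sdiff] at hc hd
    obtain ⟨hcu, hcw'⟩ := hc
    obtain ⟨hdw', hdu⟩ := hd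
    have hcC' : c ∈ C' := huC' hcu
    have hcw : c ∉ w := fun h => hcw' (hAw' (Finset.mem_inter.mpr ⟨h, hcC'⟩))
    by_cases hdA : d ∈ A
    · -- d ∈ w; use optimality of w in (C, V)
      exact appr_le_of_opt hwC hwcard hwopt (hC'sub hcC') hcw
        (Finset.mem_inter.mp hdA).1
    · -- use optimality of w' among k-subsets of C' containing A
      have hopt' : ∀ u' ∈ C'.powersetCard k, A ⊆ u' → avScore V u' ≤ avScore V w' := by
        intro u' hu' hAu'
        exact hw'max u' (by rw [hS, Finset.mem_filter]; exact ⟨hu', hAu'⟩)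
      have hcd : c ≠ d := fun h => hcw' (h ▸ hdw')
      have hcerase : c ∉ w'.erase d := fun h => hcw' (Finset.mem_of_mem_erase h)
      set u' : Finset α := insert c (w'.erase d) with hu'
      have hu'C' : u' ⊆ C' := by
        intro x hx
        rcases Finset.mem_insert.mp hx with rfl | hx
        · exact hcC'
        · exact hw'C' (Finset.mem_of_mem_erase hx)
      have hu'card : u'.card = k := by
        have h1 : 1 ≤ k := hw'card ▸ Finset.card_pos.mpr ⟨d, hdw'⟩
        rw [hu', Finset.card_insert_of_notMem hcerase,
          Finset.card_erase_of_mem hdw', hw'card]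
        omega
      have hAu' : A ⊆ u' := by
        intro x hx
        exact Finset.mem_insert_of_mem (Finset.mem_erase.mpr
          ⟨fun h => hdA (h ▸ hx), hAw' hx⟩)
      have hle := hopt' u' (Finset.mem_powersetCard.mpr ⟨hu'C', hu'card⟩) hAu'
      rw [avScore_eq_sum, avScore_eq_sum, hu', Finset.sum_insert hcerase,
        ← Finset.add_sum_erase w' (appr V) hdw'] at hle
      exact Nat.le_of_add_le_add_right hle
  have hcardeq : (u \ w').card = (w' \ u).card :=
    Finset.card_sdiff_comm (hucard.trans hw'card.symm)
  rw [avScore_eq_sum, avScore_eq_sum,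
    ← Finset.sum_inter_add_sum_sdiff u w' (appr V),
    ← Finset.sum_inter_add_sum_sdiff w' u (appr V),
    Finset.inter_comm w' u]
  exact Nat.add_le_add_left (sum_le_sum_of_card_eq (appr V) hcardeq hpt) _
end

section
/- Let ω be a Thiele function with ω(2) < 2ω(1), let k ≥ 1 and κ ≥ 1 be integers, and let G = (N, A) be a 3-regular graph with at least two edges. Construct the election with candidates: one candidate c(e) for each edge e ∈ A; pairwise disjoint sets C(i) = {c_i^1, c_i^2, c_i^3} of fresh candidates for each i ∈ {1, …, k−1}; and a fresh candidate p. Votes V: two copies of the vote {p}; for each vertex u ∈ N, one vote v(u) = {c(e) : e ∈ A incident to u}; and for each i ∈ {1, …, k−1}, the three votes {c_i^1, c_i^2}, {c_i^1, c_i^3}, {c_i^2, c_i^3}. Fix any tie-breaking linear order ⊳ placing all candidates of the sets C(i) first, then all edge candidates c(e), then p last. Then G has a vertex cover of size at most κ if and only if there exists a submultiset V' ⊆ V with |V'| ≤ κ such that p belongs to the seqω winning k-committee of (C, V ∖ V') with respect to ⊳. -/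
open Finset

attribute [local instance] Classical.propDecidable

set_option linter.unusedSectionVars false

universe u

variable {α : Type u}

section Infra

variable [DecidableEq α]

lemma marginContrib_eq (ω : ℕ → ℝ) (W : Multiset (Finset α)) (w : Finset α) {c : α}
    (hc : c ∉ w) :
    marginContrib ω W w c
      = (W.map fun v => if c ∈ v then ω ((v ∩ w).card + 1) - ω ((v ∩ w).card) else 0).sum := by
  unfold marginContrib thieleScore
  rw [← Multiset.sum_map_sub]
  refine congrArg _ (Multiset.map_congr rfl fun v _ => ?_)
  by_cases h : c ∈ v
  · have h1 : v ∩ insert c w = insert c (v ∩ w) := by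
      ext x
      simp only [Finset.mem_inter, Finset.mem_insert]
      constructor
      · rintro ⟨hv, rfl | hw⟩
        · exact Or.inl rfl
        · exact Or.inr ⟨hv, hw⟩
      · rintro (rfl | ⟨hv, hw⟩)
        · exact ⟨h, Or.inl rfl⟩
        · exact ⟨hv, Or.inr hw⟩
    have h2 : c ∉ v ∩ w := fun hx => hc (Finset.mem_inter.1 hx).2
    rw [if_pos h, h1, Finset.card_insert_of_notMem h2]
  · have h1 : v ∩ insert c w = v ∩ w := by
      ext x
      simp only [Finset.mem_inter, Finset.mem_insert]
      constructor
      · rintro ⟨hv, rfl | hw⟩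
        · exact absurd hv h
        · exact ⟨hv, hw⟩
      · rintro ⟨hv, hw⟩
        exact ⟨hv, Or.inr hw⟩
    rw [if_neg h, h1, sub_self]

lemma sum_map_ite_single (W : Multiset (Finset α)) (g : Finset α → ℝ) (P : Finset α → Prop)
    [DecidablePred P] (a : Finset α) (h : ∀ v ∈ W, P v ↔ v = a) :
    (W.map fun v => if P v then g v else 0).sum = (W.count a : ℝ) * g a := by
  induction W using Multiset.induction_on with
  | empty => simp
  | cons x s ih =>
    have hx := h x (Multiset.mem_cons_self x s)
    have hs : ∀ v ∈ s, P v ↔ v = a := fun v hv => h v (Multiset.mem_cons_of_mem hv)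
    rw [Multiset.map_cons, Multiset.sum_cons, ih hs, Multiset.count_cons]
    by_cases hxa : x = a
    · subst hxa
      rw [if_pos (hx.2 rfl), if_pos rfl]
      push_cast
      ring
    · rw [if_neg (fun hp => hxa (hx.1 hp)), if_neg (fun h => hxa h.symm)]
      push_cast
      ring

lemma sum_map_ite_pair (W : Multiset (Finset α)) (g : Finset α → ℝ) (P : Finset α → Prop)
    [DecidablePred P] (a b : Finset α) (hab : a ≠ b) (h : ∀ v ∈ W, P v ↔ v = a ∨ v = b) :
    (W.map fun v => if P v then g v else 0).sum
      = (W.count a : ℝ) * g a + (W.count b : ℝ) * g b := by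
  induction W using Multiset.induction_on with
  | empty => simp
  | cons x s ih =>
    have hx := h x (Multiset.mem_cons_self x s)
    have hs : ∀ v ∈ s, P v ↔ v = a ∨ v = b := fun v hv => h v (Multiset.mem_cons_of_mem hv)
    rw [Multiset.map_cons, Multiset.sum_cons, ih hs, Multiset.count_cons, Multiset.count_cons]
    by_cases hxa : x = a
    · subst hxa
      rw [if_pos (hx.2 (Or.inl rfl)), if_pos rfl, if_neg (fun h => hab h.symm)]
      push_cast
      ring
    · by_cases hxb : x = b
      · subst hxb
        rw [if_pos (hx.2 (Or.inr rfl)), if_neg (fun h => hxa h.symm), if_pos rfl]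
        push_cast
        ring
      · rw [if_neg (fun hp => by rcases hx.1 hp with h' | h' <;> [exact hxa h'; exact hxb h']),
          if_neg (fun h => hxa h.symm), if_neg (fun h => hxb h.symm)]
        push_cast
        ring

variable (ω : ℕ → ℝ) (pri : α → ℕ) (W : Multiset (Finset α)) (C : Finset α)

lemma maxMarginSet_subset (w : Finset α) : maxMarginSet ω W C w ⊆ C \ w :=
  Finset.filter_subset _ _

lemma seqNext_subset (w : Finset α) : seqNext ω pri W C w ⊆ C \ w :=
  (Finset.filter_subset _ _).trans (maxMarginSet_subset ω W C w)

lemma seqCommittee_succ (r : ℕ) :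
    seqCommittee ω pri W C (r + 1)
      = seqCommittee ω pri W C r ∪ seqNext ω pri W C (seqCommittee ω pri W C r) := rfl

lemma seqCommittee_subset : ∀ r, seqCommittee ω pri W C r ⊆ C
  | 0 => by simp [seqCommittee]
  | r + 1 => by
    rw [seqCommittee_succ]
    exact Finset.union_subset (seqCommittee_subset r)
      ((seqNext_subset ω pri W C _).trans Finset.sdiff_subset)

lemma exists_selection_round {c : α} :
    ∀ {n}, c ∈ seqCommittee ω pri W C n →
      ∃ r < n, c ∉ seqCommittee ω pri W C r ∧
        c ∈ seqNext ω pri W C (seqCommittee ω pri W C r) := by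
  intro n
  induction n with
  | zero => intro h; simp [seqCommittee] at h
  | succ n ih =>
    intro h
    by_cases hc : c ∈ seqCommittee ω pri W C n
    · obtain ⟨r, hr, h1, h2⟩ := ih hc
      exact ⟨r, hr.trans (Nat.lt_succ_self n), h1, h2⟩
    · refine ⟨n, Nat.lt_succ_self n, hc, ?_⟩
      rw [seqCommittee_succ, Finset.mem_union] at h
      exact h.resolve_left hc

lemma seqNext_subsingleton (hinj : Set.InjOn pri (C : Set α)) {x y : α} {w : Finset α}
    (hx : x ∈ seqNext ω pri W C w) (hy : y ∈ seqNext ω pri W C w) : x = y := by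
  have hxC : x ∈ C := Finset.mem_sdiff.1 (maxMarginSet_subset ω W C w
    ((Finset.filter_subset _ _) hx)) |>.1
  have hyC : y ∈ C := Finset.mem_sdiff.1 (maxMarginSet_subset ω W C w
    ((Finset.filter_subset _ _) hy)) |>.1
  simp only [seqNext, Finset.mem_filter] at hx hy
  exact hinj hxC hyC (le_antisymm (hx.2 y hy.1) (hy.2 x hx.1))

lemma card_seqCommittee_le (hinj : Set.InjOn pri (C : Set α)) :
    ∀ r, (seqCommittee ω pri W C r).card ≤ r
  | 0 => by simp [seqCommittee]
  | r + 1 => by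
    rw [seqCommittee_succ]
    have h1 : (seqNext ω pri W C (seqCommittee ω pri W C r)).card ≤ 1 :=
      Finset.card_le_one.2 fun a ha b hb =>
        seqNext_subsingleton ω pri W C hinj ha hb
    calc (seqCommittee ω pri W C r ∪ seqNext ω pri W C (seqCommittee ω pri W C r)).card
        ≤ _ + _ := Finset.card_union_le _ _
      _ ≤ r + 1 := add_le_add (card_seqCommittee_le hinj r) h1

lemma margin_le_of_selected {c c' : α} {w : Finset α} (hc : c ∈ seqNext ω pri W C w)
    (hc' : c' ∈ C \ w) : marginContrib ω W w c' ≤ marginContrib ω W w c := by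
  have hmax := (Finset.filter_subset _ _) hc
  exact (Finset.mem_filter.1 hmax).2 c' hc'

lemma margin_lt_of_selected {c c' : α} {w : Finset α} (hc : c ∈ seqNext ω pri W C w)
    (hc' : c' ∈ C \ w) (hpri : pri c' < pri c) :
    marginContrib ω W w c' < marginContrib ω W w c := by
  rcases lt_or_eq_of_le (margin_le_of_selected ω pri W C hc hc') with h | h
  · exact h
  · exfalso
    have hmax := (Finset.filter_subset _ _) hc
    have hmem : c' ∈ maxMarginSet ω W C w :=
      Finset.mem_filter.2 ⟨hc', fun c'' hc'' => h ▸ ((Finset.mem_filter.1 hmax).2 c'' hc'')⟩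
    simp only [seqNext, Finset.mem_filter] at hc
    exact absurd (hc.2 c' hmem) (not_le.2 hpri)

lemma seqNext_nonempty {w : Finset α} (h : (C \ w).Nonempty) :
    (seqNext ω pri W C w).Nonempty := by
  obtain ⟨x, hx, hmax⟩ := Finset.exists_max_image (C \ w) (marginContrib ω W w) h
  have hx' : x ∈ maxMarginSet ω W C w := Finset.mem_filter.2 ⟨hx, hmax⟩
  obtain ⟨y, hy, hmin⟩ := Finset.exists_min_image (maxMarginSet ω W C w) pri ⟨x, hx'⟩
  exact ⟨y, Finset.mem_filter.2 ⟨hy, hmin⟩⟩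

lemma mem_seqNext_of_forall {c : α} {w : Finset α} (hcC : c ∈ C \ w)
    (hle : ∀ c' ∈ C \ w, marginContrib ω W w c' ≤ marginContrib ω W w c)
    (hlt : ∀ c' ∈ C \ w, c' ≠ c → marginContrib ω W w c' < marginContrib ω W w c) :
    c ∈ seqNext ω pri W C w := by
  have hmax : c ∈ maxMarginSet ω W C w := Finset.mem_filter.2 ⟨hcC, hle⟩
  refine Finset.mem_filter.2 ⟨hmax, fun c' hc' => ?_⟩
  by_cases h : c' = c
  · exact h ▸ le_refl _
  · exfalso
    have hc'C := maxMarginSet_subset ω W C w hc'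
    have h1 := hlt c' hc'C h
    have h2 := (Finset.mem_filter.1 hc').2 c hcC
    exact absurd h2 (not_le.2 h1)

lemma sum_count_le' (T : Finset α) (s : Multiset α) :
    ∑ x ∈ T, s.count x ≤ Multiset.card s := by
  induction s using Multiset.induction_on with
  | empty => simp
  | cons a s ih =>
    simp only [Multiset.count_cons, Finset.sum_add_distrib, Multiset.card_cons]
    have h : (∑ x ∈ T, if x = a then 1 else 0) ≤ 1 := by
      rw [Finset.sum_ite_eq' T a (fun _ => 1)]
      split <;> simp
    omega

end Infra

namespace Stmt5

variable {β : Type u} [DecidableEq β]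

/-- Candidate type: an edge candidate `c(e)`, a fresh candidate `c_i^j` of a set `C(i)`,
or the distinguished candidate `p`. -/
abbrev Cand (β : Type u) := Finset β ⊕ (ℕ × Fin 3) ⊕ Unit

/-- The distinguished candidate `p`. -/
def pc : Cand β := Sum.inr (Sum.inr ())

/-- The candidate `c_i^j`. -/
def cI (i : ℕ) (j : Fin 3) : Cand β := Sum.inr (Sum.inl (i, j))

/-- The set `C(i) = {c_i^1, c_i^2, c_i^3}`. -/
def CiSet (i : ℕ) : Finset (Cand β) := {cI i 0, cI i 1, cI i 2}

/-- The whole candidate set. -/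
def Ctot (k : ℕ) (Aed : Finset (Finset β)) : Finset (Cand β) :=
  insert pc (Aed.image Sum.inl ∪ (Finset.range (k - 1)).biUnion CiSet)

/-- The votes: two copies of `{p}`; for each vertex `u ∈ N`, the vote consisting of the
candidates of edges incident to `u`; and for each `i < k-1`, the three votes
`{c_i^1, c_i^2}`, `{c_i^1, c_i^3}`, `{c_i^2, c_i^3}`. -/
def votes (k : ℕ) (N : Finset β) (Aed : Finset (Finset β)) : Multiset (Finset (Cand β)) :=
  Multiset.replicate 2 ({pc} : Finset (Cand β))
    + N.val.map (fun u => (Aed.filter fun e => u ∈ e).image Sum.inl)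
    + (Finset.range (k - 1)).val.bind (fun i =>
        ({{cI i 0, cI i 1}, {cI i 0, cI i 2}, {cI i 1, cI i 2}} : Multiset (Finset (Cand β))))

/-- The vertex vote of `u`. -/
def vvote (Aed : Finset (Finset β)) (u : β) : Finset (Cand β) :=
  (Aed.filter fun e => u ∈ e).image Sum.inl

/-- The block vote `{c_i^a, c_i^b}`. -/
def tv (i : ℕ) (a b : Fin 3) : Finset (Cand β) := {cI i a, cI i b}

@[simp] lemma cI_inj {i i' : ℕ} {j j' : Fin 3} :
    (cI i j : Cand β) = cI i' j' ↔ i = i' ∧ j = j' := by simp [cI]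

@[simp] lemma pc_ne_cI {i : ℕ} {j : Fin 3} : (pc : Cand β) ≠ cI i j := by simp [pc, cI]

@[simp] lemma cI_ne_pc {i : ℕ} {j : Fin 3} : (cI i j : Cand β) ≠ pc := by simp [pc, cI]

@[simp] lemma inl_ne_cI {e : Finset β} {i : ℕ} {j : Fin 3} :
    (Sum.inl e : Cand β) ≠ cI i j := by simp [cI]

@[simp] lemma cI_ne_inl {e : Finset β} {i : ℕ} {j : Fin 3} :
    (cI i j : Cand β) ≠ Sum.inl e := by simp [cI]

@[simp] lemma pc_ne_inl {e : Finset β} : (pc : Cand β) ≠ Sum.inl e := by simp [pc]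

@[simp] lemma inl_ne_pc {e : Finset β} : (Sum.inl e : Cand β) ≠ pc := by simp [pc]

@[simp] lemma mem_vvote_inl {Aed : Finset (Finset β)} {e : Finset β} {u : β} :
    (Sum.inl e : Cand β) ∈ vvote Aed u ↔ e ∈ Aed ∧ u ∈ e := by simp [vvote]

@[simp] lemma pc_not_mem_vvote {Aed : Finset (Finset β)} {u : β} :
    (pc : Cand β) ∉ vvote Aed u := by simp [vvote, pc]

@[simp] lemma cI_not_mem_vvote {Aed : Finset (Finset β)} {i : ℕ} {j : Fin 3} {u : β} :
    (cI i j : Cand β) ∉ vvote Aed u := by simp [vvote, cI]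

@[simp] lemma mem_tv {x : Cand β} {i : ℕ} {a b : Fin 3} :
    x ∈ (tv i a b : Finset (Cand β)) ↔ x = cI i a ∨ x = cI i b := by simp [tv]

@[simp] lemma mem_CiSet {x : Cand β} {i : ℕ} :
    x ∈ (CiSet i : Finset (Cand β)) ↔ x = cI i 0 ∨ x = cI i 1 ∨ x = cI i 2 := by
  simp [CiSet]

lemma tv_subset_CiSet {i : ℕ} {a b : Fin 3} : (tv i a b : Finset (Cand β)) ⊆ CiSet i := by
  intro x hx
  rcases mem_tv.1 hx with rfl | rfl <;> · simp only [mem_CiSet, cI_inj]; fin_cases a <;> simp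
    <;> fin_cases b <;> simp

lemma tv_ne_tv {i : ℕ} {a b a' b' : Fin 3} (x : Fin 3) (hx1 : x = a ∨ x = b)
    (hx2 : ¬(x = a' ∨ x = b')) : (tv i a b : Finset (Cand β)) ≠ tv i a' b' := by
  intro h
  have hm : (cI i x : Cand β) ∈ tv i a b := by
    rcases hx1 with rfl | rfl <;> simp [tv]
  rw [h] at hm
  rcases mem_tv.1 hm with h' | h' <;> rw [cI_inj] at h' <;> exact hx2 (by tauto)

lemma tv_ne_tv_of_ne {i i' : ℕ} {a b a' b' : Fin 3} (h : i ≠ i') :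
    (tv i a b : Finset (Cand β)) ≠ tv i' a' b' := by
  intro he
  have hm : (cI i a : Cand β) ∈ tv i' a' b' := he ▸ (by simp [tv])
  rcases mem_tv.1 hm with h' | h' <;> exact h (cI_inj.1 h').1

lemma vvote_ne_tv {Aed : Finset (Finset β)} {u : β} {i : ℕ} {a b : Fin 3} :
    vvote Aed u ≠ tv i a b := by
  intro h
  have hm : (cI i a : Cand β) ∈ vvote Aed u := h ▸ (by simp [tv])
  exact cI_not_mem_vvote hm

lemma pc_singleton_ne_vvote {Aed : Finset (Finset β)} {u : β} :
    ({pc} : Finset (Cand β)) ≠ vvote Aed u := by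
  intro h
  have hm : (pc : Cand β) ∈ vvote Aed u := h ▸ Finset.mem_singleton_self pc
  exact pc_not_mem_vvote hm

lemma pc_singleton_ne_tv {i : ℕ} {a b : Fin 3} :
    ({pc} : Finset (Cand β)) ≠ tv i a b := by
  intro h
  have hm : (cI i a : Cand β) ∈ ({pc} : Finset (Cand β)) := h ▸ (by simp [tv])
  exact cI_ne_pc (Finset.mem_singleton.1 hm)

lemma votes_eq (k : ℕ) (N : Finset β) (Aed : Finset (Finset β)) :
    votes k N Aed = Multiset.replicate 2 ({pc} : Finset (Cand β))
      + N.val.map (vvote Aed)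
      + (Finset.range (k - 1)).val.bind (fun i =>
          ({tv i 0 1, tv i 0 2, tv i 1 2} : Multiset (Finset (Cand β)))) := rfl

lemma mem_votes {k : ℕ} {N : Finset β} {Aed : Finset (Finset β)} {v : Finset (Cand β)} :
    v ∈ votes k N Aed ↔ v = {pc} ∨ (∃ u ∈ N, v = vvote Aed u) ∨
      ∃ i < k - 1, v = tv i 0 1 ∨ v = tv i 0 2 ∨ v = tv i 1 2 := by
  rw [votes_eq]
  simp only [Multiset.mem_add, Multiset.mem_replicate, Multiset.mem_map, Multiset.mem_bind,
    Finset.mem_val, Finset.mem_range, Multiset.mem_cons, Multiset.mem_singleton]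
  constructor
  · rintro ((⟨-, rfl⟩ | ⟨u, hu, rfl⟩) | ⟨i, hi, h⟩)
    · exact Or.inl rfl
    · exact Or.inr (Or.inl ⟨u, hu, rfl⟩)
    · exact Or.inr (Or.inr ⟨i, hi, by simpa using h⟩)
  · rintro (rfl | ⟨u, hu, rfl⟩ | ⟨i, hi, h⟩)
    · exact Or.inl (Or.inl ⟨two_ne_zero, rfl⟩)
    · exact Or.inl (Or.inr ⟨u, hu, rfl⟩)
    · exact Or.inr ⟨i, hi, by simpa using h⟩

lemma mem_Ctot {k : ℕ} {Aed : Finset (Finset β)} {x : Cand β} :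
    x ∈ Ctot k Aed ↔ x = pc ∨ (∃ e ∈ Aed, x = Sum.inl e) ∨
      ∃ i < k - 1, ∃ j : Fin 3, x = cI i j := by
  simp only [Ctot, Finset.mem_insert, Finset.mem_union, Finset.mem_image, Finset.mem_biUnion,
    Finset.mem_range, mem_CiSet]
  constructor
  · rintro (rfl | (⟨e, he, rfl⟩ | ⟨i, hi, (rfl | rfl | rfl)⟩))
    · exact Or.inl rfl
    · exact Or.inr (Or.inl ⟨e, he, rfl⟩)
    · exact Or.inr (Or.inr ⟨i, hi, 0, rfl⟩)
    · exact Or.inr (Or.inr ⟨i, hi, 1, rfl⟩)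
    · exact Or.inr (Or.inr ⟨i, hi, 2, rfl⟩)
  · rintro (rfl | ⟨e, he, rfl⟩ | ⟨i, hi, j, rfl⟩)
    · exact Or.inl rfl
    · exact Or.inr (Or.inl ⟨e, he, rfl⟩)
    · refine Or.inr (Or.inr ⟨i, hi, ?_⟩)
      fin_cases j <;> simp

lemma pc_mem_Ctot {k : ℕ} {Aed : Finset (Finset β)} : (pc : Cand β) ∈ Ctot k Aed :=
  Finset.mem_insert_self _ _

lemma inl_mem_Ctot {k : ℕ} {Aed : Finset (Finset β)} {e : Finset β} (he : e ∈ Aed) :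
    (Sum.inl e : Cand β) ∈ Ctot k Aed :=
  mem_Ctot.2 (Or.inr (Or.inl ⟨e, he, rfl⟩))

lemma cI_mem_Ctot {k : ℕ} {Aed : Finset (Finset β)} {i : ℕ} (hi : i < k - 1) (j : Fin 3) :
    (cI i j : Cand β) ∈ Ctot k Aed :=
  mem_Ctot.2 (Or.inr (Or.inr ⟨i, hi, j, rfl⟩))

lemma CiSet_disjoint {i i' : ℕ} (h : i ≠ i') :
    Disjoint (CiSet i : Finset (Cand β)) (CiSet i') := by
  rw [Finset.disjoint_left]
  intro x hx hx'
  rcases mem_CiSet.1 hx with rfl | rfl | rfl <;>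
    rcases mem_CiSet.1 hx' with h' | h' | h' <;> exact h (cI_inj.1 h').1

section Counts

variable {k : ℕ} {N : Finset β} {Aed : Finset (Finset β)}

lemma vvote_inj (hedge : ∀ e ∈ Aed, e.card = 2 ∧ e ⊆ N)
    (hreg : ∀ u ∈ N, (Aed.filter fun e => u ∈ e).card = 3)
    {u u' : β} (hu : u ∈ N) (h : vvote Aed u = vvote Aed u') : u = u' := by
  by_contra hne
  have hsub : Aed.filter (fun e => u ∈ e) ⊆ {({u, u'} : Finset β)} := by
    intro e he'
    rw [Finset.mem_filter] at he'
    obtain ⟨heA, heu⟩ := he'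
    have h1 : (Sum.inl e : Cand β) ∈ vvote Aed u' := by
      rw [← h]; exact mem_vvote_inl.2 ⟨heA, heu⟩
    have h2 : u' ∈ e := (mem_vvote_inl.1 h1).2
    have hcard := (hedge e heA).1
    have hsub2 : ({u, u'} : Finset β) ⊆ e := by
      intro x hx
      rcases Finset.mem_insert.1 hx with rfl | hx
      · exact heu
      · exact (Finset.mem_singleton.1 hx) ▸ h2
    have : ({u, u'} : Finset β) = e :=
      Finset.eq_of_subset_of_card_le hsub2 (by rw [hcard, Finset.card_insert_of_notMem
        (by simpa using hne), Finset.card_singleton])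
    exact Finset.mem_singleton.2 this.symm
  have hle := Finset.card_le_card hsub
  rw [hreg u hu, Finset.card_singleton] at hle
  omega

lemma count_votes_pc : (votes k N Aed).count ({pc} : Finset (Cand β)) = 2 := by
  rw [votes_eq, Multiset.count_add, Multiset.count_add]
  have h1 : Multiset.count ({pc} : Finset (Cand β))
      (Multiset.replicate 2 ({pc} : Finset (Cand β))) = 2 := by
    rw [Multiset.count_replicate, if_pos rfl]
  have h2 : Multiset.count ({pc} : Finset (Cand β)) (N.val.map (vvote Aed)) = 0 := by
    rw [Multiset.count_eq_zero]
    intro hm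
    obtain ⟨u, -, hu⟩ := Multiset.mem_map.1 hm
    exact pc_singleton_ne_vvote hu.symm
  have h3 : Multiset.count ({pc} : Finset (Cand β))
      ((Finset.range (k - 1)).val.bind (fun i =>
        ({tv i 0 1, tv i 0 2, tv i 1 2} : Multiset (Finset (Cand β))))) = 0 := by
    rw [Multiset.count_eq_zero]
    intro hm
    obtain ⟨i, -, hu⟩ := Multiset.mem_bind.1 hm
    rcases (by simpa using hu : ({pc} : Finset (Cand β)) = tv i 0 1 ∨ _ ∨ _) with
      h | h | h <;> exact pc_singleton_ne_tv h
  omega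

lemma count_nodup_val {s : Finset β} {u : β} : s.val.count u = if u ∈ s then 1 else 0 := by
  split
  · exact Multiset.count_eq_one_of_mem s.nodup (by assumption)
  · rw [Multiset.count_eq_zero]; simpa using (by assumption : u ∉ s)

lemma count_map_vvote (hedge : ∀ e ∈ Aed, e.card = 2 ∧ e ⊆ N)
    (hreg : ∀ u ∈ N, (Aed.filter fun e => u ∈ e).card = 3)
    {u : β} (hu : u ∈ N) (S : Finset β) (hSN : S ⊆ N) :
    Multiset.count (vvote Aed u) (S.val.map (vvote Aed)) = if u ∈ S then 1 else 0 := by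
  rw [Multiset.count_map]
  have : Multiset.filter (fun a => vvote Aed u = vvote Aed a) S.val
      = Multiset.filter (fun a => a = u) S.val := by
    apply Multiset.filter_congr
    intro x hx
    constructor
    · intro h; exact (vvote_inj hedge hreg hu h).symm
    · rintro rfl; rfl
  rw [this, Multiset.filter_eq', Multiset.card_replicate, count_nodup_val]

lemma count_votes_vvote (hedge : ∀ e ∈ Aed, e.card = 2 ∧ e ⊆ N)
    (hreg : ∀ u ∈ N, (Aed.filter fun e => u ∈ e).card = 3)
    {u : β} (hu : u ∈ N) : (votes k N Aed).count (vvote Aed u) = 1 := by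
  rw [votes_eq, Multiset.count_add, Multiset.count_add]
  have h1 : Multiset.count (vvote Aed u)
      (Multiset.replicate 2 ({pc} : Finset (Cand β))) = 0 := by
    rw [Multiset.count_replicate, if_neg pc_singleton_ne_vvote]
  have h2 := count_map_vvote hedge hreg hu N (le_refl N)
  rw [if_pos hu] at h2
  have h3 : Multiset.count (vvote Aed u)
      ((Finset.range (k - 1)).val.bind (fun i =>
        ({tv i 0 1, tv i 0 2, tv i 1 2} : Multiset (Finset (Cand β))))) = 0 := by
    rw [Multiset.count_eq_zero]
    intro hm
    obtain ⟨i, -, hu'⟩ := Multiset.mem_bind.1 hm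
    rcases (by simpa using hu' : vvote Aed u = tv i 0 1 ∨ _ ∨ _) with
      h | h | h <;> exact vvote_ne_tv h
  omega

lemma count_triple_tv {i i' : ℕ} {a b : Fin 3}
    (hab : (a, b) = ((0 : Fin 3), (1 : Fin 3)) ∨ (a, b) = (0, 2) ∨ (a, b) = (1, 2)) :
    Multiset.count (tv i a b : Finset (Cand β))
      ({tv i' 0 1, tv i' 0 2, tv i' 1 2} : Multiset (Finset (Cand β)))
      = if i' = i then 1 else 0 := by
  by_cases h : i' = i
  · subst h
    rcases hab with h | h | h <;> rw [Prod.mk.injEq] at h <;> obtain ⟨rfl, rfl⟩ := h <;>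
      · rw [if_pos rfl]
        rw [show ({tv i' 0 1, tv i' 0 2, tv i' 1 2} : Multiset (Finset (Cand β)))
          = tv i' 0 1 ::ₘ tv i' 0 2 ::ₘ {tv i' 1 2} from rfl]
        rw [Multiset.count_cons, Multiset.count_cons, Multiset.count_singleton]
        have e1 : (tv i' 0 1 : Finset (Cand β)) ≠ tv i' 0 2 :=
          tv_ne_tv 1 (by simp) (by decide)
        have e2 : (tv i' 0 1 : Finset (Cand β)) ≠ tv i' 1 2 :=
          tv_ne_tv 0 (by simp) (by decide)
        have e3 : (tv i' 0 2 : Finset (Cand β)) ≠ tv i' 1 2 :=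
          tv_ne_tv 0 (by simp) (by decide)
        simp only [e1, e2, e3, e1.symm, e2.symm, e3.symm, if_true, if_false, eq_self_iff_true]
  · rw [if_neg h]
    rw [Multiset.count_eq_zero]
    intro hm
    rcases (by simpa using hm : (tv i a b : Finset (Cand β)) = tv i' 0 1 ∨ _ ∨ _) with
      h' | h' | h' <;> exact tv_ne_tv_of_ne (fun he => h he.symm) h'

lemma count_votes_tv {i : ℕ} (hi : i < k - 1) {a b : Fin 3}
    (hab : (a, b) = ((0 : Fin 3), (1 : Fin 3)) ∨ (a, b) = (0, 2) ∨ (a, b) = (1, 2)) :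
    (votes k N Aed).count (tv i a b) = 1 := by
  rw [votes_eq, Multiset.count_add, Multiset.count_add]
  have h1 : Multiset.count (tv i a b : Finset (Cand β))
      (Multiset.replicate 2 ({pc} : Finset (Cand β))) = 0 := by
    rw [Multiset.count_replicate, if_neg pc_singleton_ne_tv]
  have h2 : Multiset.count (tv i a b : Finset (Cand β)) (N.val.map (vvote Aed)) = 0 := by
    rw [Multiset.count_eq_zero]
    intro hm
    obtain ⟨u, -, hu⟩ := Multiset.mem_map.1 hm
    exact vvote_ne_tv hu
  have h3 : Multiset.count (tv i a b : Finset (Cand β))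
      ((Finset.range (k - 1)).val.bind (fun i' =>
        ({tv i' 0 1, tv i' 0 2, tv i' 1 2} : Multiset (Finset (Cand β))))) = 1 := by
    rw [Multiset.count_bind]
    have : Multiset.map (fun i' => Multiset.count (tv i a b : Finset (Cand β))
        ({tv i' 0 1, tv i' 0 2, tv i' 1 2} : Multiset (Finset (Cand β))))
        (Finset.range (k - 1)).val
        = Multiset.map (fun i' => if i' = i then 1 else 0) (Finset.range (k - 1)).val :=
      Multiset.map_congr rfl fun i' _ => count_triple_tv hab
    rw [this]
    have : (Multiset.map (fun i' => if i' = i then 1 else 0) (Finset.range (k - 1)).val).sum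
        = ∑ i' ∈ Finset.range (k - 1), if i' = i then 1 else 0 := rfl
    rw [this, Finset.sum_ite_eq' (Finset.range (k - 1)) i (fun _ => 1),
      if_pos (Finset.mem_range.2 hi)]
  omega

end Counts

section Margins

variable {k : ℕ} {N : Finset β} {Aed : Finset (Finset β)}
variable (ω : ℕ → ℝ) {W : Multiset (Finset (Cand β))} {w : Finset (Cand β)}

lemma margin_pc_eq (hω0 : ω 0 = 0) (hW : W ≤ votes k N Aed) (hw : (pc : Cand β) ∉ w) :
    marginContrib ω W w pc = (W.count {pc} : ℝ) * ω 1 := by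
  rw [marginContrib_eq ω W w hw]
  have hsupp : ∀ v ∈ W, (pc : Cand β) ∈ v ↔ v = {pc} := by
    intro v hv
    constructor
    · intro hpc
      rcases mem_votes.1 (Multiset.mem_of_le hW hv) with h | ⟨u, hu, rfl⟩ | ⟨i, hi, h⟩
      · exact h
      · exact absurd hpc pc_not_mem_vvote
      · exfalso
        rcases h with rfl | rfl | rfl <;>
          · rcases mem_tv.1 hpc with h' | h' <;> exact pc_ne_cI h'
    · rintro rfl; exact Finset.mem_singleton_self pc
  rw [sum_map_ite_single W (fun v => ω ((v ∩ w).card + 1) - ω ((v ∩ w).card))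
    (fun v => (pc : Cand β) ∈ v) {pc} hsupp]
  rw [Finset.singleton_inter_of_notMem hw]
  simp [hω0]

lemma margin_edge_eq (hW : W ≤ votes k N Aed)
    (hedge : ∀ e ∈ Aed, e.card = 2 ∧ e ⊆ N)
    (hreg : ∀ u ∈ N, (Aed.filter fun e => u ∈ e).card = 3)
    {e : Finset β} (he : e ∈ Aed) {u1 u2 : β} (hne : u1 ≠ u2) (heq : e = {u1, u2})
    (hw : (Sum.inl e : Cand β) ∉ w) :
    marginContrib ω W w (Sum.inl e)
      = (W.count (vvote Aed u1) : ℝ)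
          * (ω ((vvote Aed u1 ∩ w).card + 1) - ω ((vvote Aed u1 ∩ w).card))
        + (W.count (vvote Aed u2) : ℝ)
          * (ω ((vvote Aed u2 ∩ w).card + 1) - ω ((vvote Aed u2 ∩ w).card)) := by
  have hu1N : u1 ∈ N := (hedge e he).2 (by simp [heq])
  have hu2N : u2 ∈ N := (hedge e he).2 (by simp [heq])
  have hvne : vvote Aed u1 ≠ vvote Aed u2 := fun h => hne (vvote_inj hedge hreg hu1N h)
  rw [marginContrib_eq ω W w hw]
  have hsupp : ∀ v ∈ W, (Sum.inl e : Cand β) ∈ v ↔ v = vvote Aed u1 ∨ v = vvote Aed u2 := by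
    intro v hv
    constructor
    · intro hm
      rcases mem_votes.1 (Multiset.mem_of_le hW hv) with rfl | ⟨u, hu, rfl⟩ | ⟨i, hi, h⟩
      · exact absurd (Finset.mem_singleton.1 hm) inl_ne_pc
      · have hue : u ∈ e := (mem_vvote_inl.1 hm).2
        rw [heq] at hue
        rcases Finset.mem_insert.1 hue with rfl | hue
        · exact Or.inl rfl
        · exact Or.inr (by rw [Finset.mem_singleton.1 hue])
      · exfalso
        rcases h with rfl | rfl | rfl <;>
          · rcases mem_tv.1 hm with h' | h' <;> exact inl_ne_cI h'
    · rintro (rfl | rfl)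
      · exact mem_vvote_inl.2 ⟨he, by simp [heq]⟩
      · exact mem_vvote_inl.2 ⟨he, by simp [heq]⟩
  rw [sum_map_ite_pair W (fun v => ω ((v ∩ w).card + 1) - ω ((v ∩ w).card))
    (fun v => (Sum.inl e : Cand β) ∈ v) _ _ hvne hsupp]

lemma inter_comm_sub {T w Ci : Finset (Cand β)} (hT : T ⊆ Ci) : T ∩ w = T ∩ (w ∩ Ci) := by
  ext y
  simp only [Finset.mem_inter]
  exact ⟨fun ⟨h1, h2⟩ => ⟨h1, h2, hT h1⟩, fun ⟨h1, h2, _⟩ => ⟨h1, h2⟩⟩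

lemma margin_cI0_eq (hW : W ≤ votes k N Aed) {i : ℕ} (hw : (cI i 0 : Cand β) ∉ w) :
    marginContrib ω W w (cI i 0)
      = (W.count (tv i 0 1) : ℝ) * (ω ((tv i 0 1 ∩ w).card + 1) - ω ((tv i 0 1 ∩ w).card))
      + (W.count (tv i 0 2) : ℝ) * (ω ((tv i 0 2 ∩ w).card + 1) - ω ((tv i 0 2 ∩ w).card)) := by
  rw [marginContrib_eq ω W w hw]
  have hvne : (tv i 0 1 : Finset (Cand β)) ≠ tv i 0 2 := tv_ne_tv 1 (by simp) (by decide)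
  have hsupp : ∀ v ∈ W, (cI i 0 : Cand β) ∈ v ↔ v = tv i 0 1 ∨ v = tv i 0 2 := by
    intro v hv
    constructor
    · intro hm
      rcases mem_votes.1 (Multiset.mem_of_le hW hv) with rfl | ⟨u, hu, rfl⟩ | ⟨i', hi', h⟩
      · exact absurd (Finset.mem_singleton.1 hm) cI_ne_pc
      · exact absurd hm cI_not_mem_vvote
      · rcases h with rfl | rfl | rfl <;>
          rcases mem_tv.1 hm with h' | h' <;> rw [cI_inj] at h' <;>
          first
            | (exact absurd h'.2 (by decide))
            | (obtain ⟨rfl, -⟩ := h'; first | exact Or.inl rfl | exact Or.inr rfl)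
    · rintro (rfl | rfl) <;> simp [tv]
  rw [sum_map_ite_pair W (fun v => ω ((v ∩ w).card + 1) - ω ((v ∩ w).card))
    (fun v => (cI i 0 : Cand β) ∈ v) _ _ hvne hsupp]

lemma margin_cI1_eq (hW : W ≤ votes k N Aed) {i : ℕ} (hw : (cI i 1 : Cand β) ∉ w) :
    marginContrib ω W w (cI i 1)
      = (W.count (tv i 0 1) : ℝ) * (ω ((tv i 0 1 ∩ w).card + 1) - ω ((tv i 0 1 ∩ w).card))
      + (W.count (tv i 1 2) : ℝ) * (ω ((tv i 1 2 ∩ w).card + 1) - ω ((tv i 1 2 ∩ w).card)) := by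
  rw [marginContrib_eq ω W w hw]
  have hvne : (tv i 0 1 : Finset (Cand β)) ≠ tv i 1 2 := tv_ne_tv 0 (by simp) (by decide)
  have hsupp : ∀ v ∈ W, (cI i 1 : Cand β) ∈ v ↔ v = tv i 0 1 ∨ v = tv i 1 2 := by
    intro v hv
    constructor
    · intro hm
      rcases mem_votes.1 (Multiset.mem_of_le hW hv) with rfl | ⟨u, hu, rfl⟩ | ⟨i', hi', h⟩
      · exact absurd (Finset.mem_singleton.1 hm) cI_ne_pc
      · exact absurd hm cI_not_mem_vvote
      · rcases h with rfl | rfl | rfl <;>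
          rcases mem_tv.1 hm with h' | h' <;> rw [cI_inj] at h' <;>
          first
            | (exact absurd h'.2 (by decide))
            | (obtain ⟨rfl, -⟩ := h'; first | exact Or.inl rfl | exact Or.inr rfl)
    · rintro (rfl | rfl) <;> simp [tv]
  rw [sum_map_ite_pair W (fun v => ω ((v ∩ w).card + 1) - ω ((v ∩ w).card))
    (fun v => (cI i 1 : Cand β) ∈ v) _ _ hvne hsupp]

lemma margin_cI2_eq (hW : W ≤ votes k N Aed) {i : ℕ} (hw : (cI i 2 : Cand β) ∉ w) :
    marginContrib ω W w (cI i 2)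
      = (W.count (tv i 0 2) : ℝ) * (ω ((tv i 0 2 ∩ w).card + 1) - ω ((tv i 0 2 ∩ w).card))
      + (W.count (tv i 1 2) : ℝ) * (ω ((tv i 1 2 ∩ w).card + 1) - ω ((tv i 1 2 ∩ w).card)) := by
  rw [marginContrib_eq ω W w hw]
  have hvne : (tv i 0 2 : Finset (Cand β)) ≠ tv i 1 2 := tv_ne_tv 0 (by simp) (by decide)
  have hsupp : ∀ v ∈ W, (cI i 2 : Cand β) ∈ v ↔ v = tv i 0 2 ∨ v = tv i 1 2 := by
    intro v hv
    constructor
    · intro hm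
      rcases mem_votes.1 (Multiset.mem_of_le hW hv) with rfl | ⟨u, hu, rfl⟩ | ⟨i', hi', h⟩
      · exact absurd (Finset.mem_singleton.1 hm) cI_ne_pc
      · exact absurd hm cI_not_mem_vvote
      · rcases h with rfl | rfl | rfl <;>
          rcases mem_tv.1 hm with h' | h' <;> rw [cI_inj] at h' <;>
          first
            | (exact absurd h'.2 (by decide))
            | (obtain ⟨rfl, -⟩ := h'; first | exact Or.inl rfl | exact Or.inr rfl)
    · rintro (rfl | rfl) <;> simp [tv]
  rw [sum_map_ite_pair W (fun v => ω ((v ∩ w).card + 1) - ω ((v ∩ w).card))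
    (fun v => (cI i 2 : Cand β) ∈ v) _ _ hvne hsupp]

end Margins


section Forward

lemma forward_dir {k : ℕ} {N : Finset β} {Aed : Finset (Finset β)}
    (ω : ℕ → ℝ) (hω0 : ω 0 = 0) (hmono : ∀ i, ω i ≤ ω (i + 1))
    (hω : ω 2 < 2 * ω 1) (hk : 1 ≤ k)
    (hedge : ∀ e ∈ Aed, e.card = 2 ∧ e ⊆ N)
    (hreg : ∀ u ∈ N, (Aed.filter fun e => u ∈ e).card = 3)
    (pri : Cand β → ℕ) (hinj : Set.InjOn pri (Ctot k Aed : Set (Cand β)))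
    (hpri3 : ∀ i ∈ Finset.range (k - 1), ∀ j : Fin 3, pri (cI i j : Cand β) < pri pc)
    (S : Finset β) (hSN : S ⊆ N) (hcov : ∀ e ∈ Aed, (e ∩ S).Nonempty) :
    pc ∈ seqCommittee ω pri (votes k N Aed - S.val.map (vvote Aed)) (Ctot k Aed) k := by
  have hω1 : (0:ℝ) < ω 1 := by linarith [hmono 1]
  set W := votes k N Aed - S.val.map (vvote Aed) with hWdef
  have hWle : W ≤ votes k N Aed := tsub_le_self
  have hcV'pc : (S.val.map (vvote Aed)).count ({pc} : Finset (Cand β)) = 0 := by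
    rw [Multiset.count_eq_zero]
    intro hm
    obtain ⟨u, -, hu⟩ := Multiset.mem_map.1 hm
    exact pc_singleton_ne_vvote hu.symm
  have hcWpc : W.count ({pc} : Finset (Cand β)) = 2 := by
    rw [hWdef, Multiset.count_sub, hcV'pc, count_votes_pc]
  have hcWtv : ∀ i, i < k - 1 → ∀ a b : Fin 3,
      ((a, b) = ((0:Fin 3), (1:Fin 3)) ∨ (a, b) = (0, 2) ∨ (a, b) = (1, 2)) →
      W.count (tv i a b) = 1 := by
    intro i hi a b hab
    have h0 : (S.val.map (vvote Aed)).count (tv i a b) = 0 := by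
      rw [Multiset.count_eq_zero]
      intro hm
      obtain ⟨u, -, hu⟩ := Multiset.mem_map.1 hm
      exact vvote_ne_tv hu
    rw [hWdef, Multiset.count_sub, h0, count_votes_tv hi hab]
  have hcWvv : ∀ u ∈ N, W.count (vvote Aed u) = if u ∈ S then 0 else 1 := by
    intro u hu
    rw [hWdef, Multiset.count_sub, count_votes_vvote hedge hreg hu,
      count_map_vvote hedge hreg hu S hSN]
    split <;> rfl
  set F := (Finset.range (k - 1)).biUnion (CiSet (β := β)) with hF
  have hmemF : ∀ x ∈ F, ∃ i, i < k - 1 ∧ ∃ j : Fin 3, x = cI i j := by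
    intro x hx
    obtain ⟨i, hi, hxi⟩ := Finset.mem_biUnion.1 hx
    rcases mem_CiSet.1 hxi with rfl | rfl | rfl
    exacts [⟨i, Finset.mem_range.1 hi, 0, rfl⟩, ⟨i, Finset.mem_range.1 hi, 1, rfl⟩,
      ⟨i, Finset.mem_range.1 hi, 2, rfl⟩]
  have hdisjW : ∀ (w : Finset (Cand β)), ∀ i ∈ Finset.range (k - 1),
      ∀ i' ∈ Finset.range (k - 1), i ≠ i' →
      Disjoint (w ∩ CiSet i) (w ∩ CiSet i') := fun w i _ i' _ hne =>
    (CiSet_disjoint hne).mono Finset.inter_subset_right Finset.inter_subset_right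
  have key : ∀ w : Finset (Cand β), w ⊆ F →
      (∀ i ∈ Finset.range (k - 1), (w ∩ CiSet i).card ≤ 1) →
      ((pc : Cand β) ∉ w)
      ∧ marginContrib ω W w pc = 2 * ω 1
      ∧ (∀ e ∈ Aed, (Sum.inl e : Cand β) ∉ w ∧ marginContrib ω W w (Sum.inl e) ≤ ω 1)
      ∧ (∀ i, i < k - 1 → ∀ j : Fin 3, (cI i j : Cand β) ∉ w →
          (w ∩ CiSet i = ∅ → marginContrib ω W w (cI i j) = 2 * ω 1)
          ∧ (w ∩ CiSet i ≠ ∅ → marginContrib ω W w (cI i j) = ω 2)) := by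
    intro w hwF hwblk
    have hpcw : (pc : Cand β) ∉ w := fun h => by
      obtain ⟨i, -, j, hj⟩ := hmemF pc (hwF h)
      exact pc_ne_cI hj
    have hinlw : ∀ e : Finset β, (Sum.inl e : Cand β) ∉ w := fun e h => by
      obtain ⟨i, -, j, hj⟩ := hmemF _ (hwF h)
      exact inl_ne_cI hj
    have hvint : ∀ u : β, vvote Aed u ∩ w = ∅ := by
      intro u
      rw [Finset.eq_empty_iff_forall_notMem]
      intro x hx
      obtain ⟨hx1, hx2⟩ := Finset.mem_inter.1 hx
      obtain ⟨e, -, rfl⟩ := Finset.mem_image.1 hx1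
      exact hinlw _ hx2
    refine ⟨hpcw, ?_, ?_, ?_⟩
    · rw [margin_pc_eq ω hω0 hWle hpcw, hcWpc]
      norm_num
    · intro e he
      refine ⟨hinlw e, ?_⟩
      obtain ⟨u1, u2, hne, heq⟩ := Finset.card_eq_two.1 (hedge e he).1
      have hu1N : u1 ∈ N := (hedge e he).2 (by simp [heq])
      have hu2N : u2 ∈ N := (hedge e he).2 (by simp [heq])
      obtain ⟨x, hx⟩ := hcov e he
      obtain ⟨hxe, hxS⟩ := Finset.mem_inter.1 hx
      rw [heq] at hxe
      have hcase : u1 ∈ S ∨ u2 ∈ S := by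
        rcases Finset.mem_insert.1 hxe with rfl | hxe'
        · exact Or.inl hxS
        · exact Or.inr ((Finset.mem_singleton.1 hxe') ▸ hxS)
      rw [margin_edge_eq ω hWle hedge hreg he hne heq (hinlw e), hvint u1, hvint u2,
        hcWvv u1 hu1N, hcWvv u2 hu2N]
      simp only [Finset.card_empty, hω0, sub_zero, zero_add]
      by_cases h1 : u1 ∈ S <;> by_cases h2 : u2 ∈ S <;>
        simp only [h1, h2, if_true, if_false, Nat.cast_zero, Nat.cast_one, zero_mul, one_mul,
          zero_add, add_zero] <;>
        first
          | linarith
          | (exfalso; tauto)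
    · intro i hi j hjw
      have hj3 : j = 0 ∨ j = 1 ∨ j = 2 := by fin_cases j <;> simp
      have hcnt01 := hcWtv i hi 0 1 (by tauto)
      have hcnt02 := hcWtv i hi 0 2 (by tauto)
      have hcnt12 := hcWtv i hi 1 2 (by tauto)
      constructor
      · intro h0
        have hint : ∀ a b : Fin 3, (tv i a b : Finset (Cand β)) ∩ w = ∅ := by
          intro a b
          rw [inter_comm_sub (tv_subset_CiSet), h0, Finset.inter_empty]
        rcases hj3 with rfl | rfl | rfl
        · rw [margin_cI0_eq ω hWle hjw, hcnt01, hcnt02, hint 0 1, hint 0 2]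
          norm_num [hω0] <;> ring
        · rw [margin_cI1_eq ω hWle hjw, hcnt01, hcnt12, hint 0 1, hint 1 2]
          norm_num [hω0] <;> ring
        · rw [margin_cI2_eq ω hWle hjw, hcnt02, hcnt12, hint 0 2, hint 1 2]
          norm_num [hω0] <;> ring
      · intro hne0
        have hcard1 : (w ∩ CiSet i).card = 1 :=
          le_antisymm (hwblk i (Finset.mem_range.2 hi))
            (Finset.card_pos.2 (Finset.nonempty_iff_ne_empty.2 hne0))
        obtain ⟨y, hy⟩ := Finset.card_eq_one.1 hcard1
        have hymem : y ∈ w ∩ CiSet i := hy ▸ Finset.mem_singleton_self y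
        have hyw : y ∈ w := (Finset.mem_inter.1 hymem).1
        have hyC : y ∈ CiSet i := (Finset.mem_inter.1 hymem).2
        rcases hj3 with rfl | rfl | rfl <;>
          rcases mem_CiSet.1 hyC with rfl | rfl | rfl
        · exact absurd hyw hjw
        · have e1 : (tv i 0 1 : Finset (Cand β)) ∩ w = {cI i 1} := by
            rw [inter_comm_sub (tv_subset_CiSet), hy, Finset.inter_singleton_of_mem (by simp [tv])]
          have e2 : (tv i 0 2 : Finset (Cand β)) ∩ w = (∅ : Finset (Cand β)) := by
            rw [inter_comm_sub (tv_subset_CiSet), hy, Finset.inter_singleton_of_notMem (by simp [tv])]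
          rw [margin_cI0_eq ω hWle hjw, hcnt01, hcnt02, e1, e2]
          norm_num [hω0] <;> ring
        · have e1 : (tv i 0 1 : Finset (Cand β)) ∩ w = (∅ : Finset (Cand β)) := by
            rw [inter_comm_sub (tv_subset_CiSet), hy, Finset.inter_singleton_of_notMem (by simp [tv])]
          have e2 : (tv i 0 2 : Finset (Cand β)) ∩ w = {cI i 2} := by
            rw [inter_comm_sub (tv_subset_CiSet), hy, Finset.inter_singleton_of_mem (by simp [tv])]
          rw [margin_cI0_eq ω hWle hjw, hcnt01, hcnt02, e1, e2]
          norm_num [hω0] <;> ring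
        · have e1 : (tv i 0 1 : Finset (Cand β)) ∩ w = {cI i 0} := by
            rw [inter_comm_sub (tv_subset_CiSet), hy, Finset.inter_singleton_of_mem (by simp [tv])]
          have e2 : (tv i 1 2 : Finset (Cand β)) ∩ w = (∅ : Finset (Cand β)) := by
            rw [inter_comm_sub (tv_subset_CiSet), hy, Finset.inter_singleton_of_notMem (by simp [tv])]
          rw [margin_cI1_eq ω hWle hjw, hcnt01, hcnt12, e1, e2]
          norm_num [hω0] <;> ring
        · exact absurd hyw hjw
        · have e1 : (tv i 0 1 : Finset (Cand β)) ∩ w = (∅ : Finset (Cand β)) := by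
            rw [inter_comm_sub (tv_subset_CiSet), hy, Finset.inter_singleton_of_notMem (by simp [tv])]
          have e2 : (tv i 1 2 : Finset (Cand β)) ∩ w = {cI i 2} := by
            rw [inter_comm_sub (tv_subset_CiSet), hy, Finset.inter_singleton_of_mem (by simp [tv])]
          rw [margin_cI1_eq ω hWle hjw, hcnt01, hcnt12, e1, e2]
          norm_num [hω0] <;> ring
        · have e1 : (tv i 0 2 : Finset (Cand β)) ∩ w = {cI i 0} := by
            rw [inter_comm_sub (tv_subset_CiSet), hy, Finset.inter_singleton_of_mem (by simp [tv])]
          have e2 : (tv i 1 2 : Finset (Cand β)) ∩ w = (∅ : Finset (Cand β)) := by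
            rw [inter_comm_sub (tv_subset_CiSet), hy, Finset.inter_singleton_of_notMem (by simp [tv])]
          rw [margin_cI2_eq ω hWle hjw, hcnt02, hcnt12, e1, e2]
          norm_num [hω0] <;> ring
        · have e1 : (tv i 0 2 : Finset (Cand β)) ∩ w = (∅ : Finset (Cand β)) := by
            rw [inter_comm_sub (tv_subset_CiSet), hy, Finset.inter_singleton_of_notMem (by simp [tv])]
          have e2 : (tv i 1 2 : Finset (Cand β)) ∩ w = {cI i 1} := by
            rw [inter_comm_sub (tv_subset_CiSet), hy, Finset.inter_singleton_of_mem (by simp [tv])]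
          rw [margin_cI2_eq ω hWle hjw, hcnt02, hcnt12, e1, e2]
          norm_num [hω0] <;> ring
        · exact absurd hyw hjw
  have hinv : ∀ r, r ≤ k - 1 → (seqCommittee ω pri W (Ctot k Aed) r ⊆ F
      ∧ (seqCommittee ω pri W (Ctot k Aed) r).card = r
      ∧ ∀ i ∈ Finset.range (k - 1),
          ((seqCommittee ω pri W (Ctot k Aed) r) ∩ CiSet i).card ≤ 1) := by
    intro r
    induction r with
    | zero =>
      intro _
      refine ⟨by simp [seqCommittee], by simp [seqCommittee], fun i _ => by simp [seqCommittee]⟩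
    | succ r ih =>
      intro hr
      obtain ⟨h1, h2, h3⟩ := ih (Nat.le_of_succ_le hr)
      set w := seqCommittee ω pri W (Ctot k Aed) r with hw
      obtain ⟨hpcw, hmp, hme, hmc⟩ := key w h1 h3
      have hbound : ∀ c ∈ Ctot k Aed \ w, marginContrib ω W w c ≤ 2 * ω 1 := by
        intro c hc
        obtain ⟨hcC, hcw⟩ := Finset.mem_sdiff.1 hc
        rcases mem_Ctot.1 hcC with rfl | ⟨e, he, rfl⟩ | ⟨i, hi, j, rfl⟩
        · exact le_of_eq hmp
        · have := (hme e he).2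
          linarith
        · obtain ⟨hA, hB⟩ := hmc i hi j hcw
          by_cases h0 : w ∩ CiSet i = ∅
          · exact le_of_eq (hA h0)
          · rw [hB h0]; linarith
      have huntouched : ∃ i, i < k - 1 ∧ w ∩ CiSet i = ∅ := by
        by_contra hall
        push_neg at hall
        have hsum : ∀ i ∈ Finset.range (k - 1), 1 ≤ (w ∩ CiSet i).card := by
          intro i hi
          exact Finset.card_pos.2
            (hall i (Finset.mem_range.1 hi))
        have hcard : k - 1 ≤ ∑ i ∈ Finset.range (k - 1), (w ∩ CiSet i).card := by
          calc k - 1 = ∑ _i ∈ Finset.range (k - 1), 1 := by simp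
            _ ≤ _ := Finset.sum_le_sum hsum
        have hbU : (Finset.range (k - 1)).biUnion (fun i => w ∩ CiSet i) ⊆ w := by
          intro x hx
          obtain ⟨i, -, hxi⟩ := Finset.mem_biUnion.1 hx
          exact (Finset.mem_inter.1 hxi).1
        have hcb := Finset.card_biUnion (hdisjW w)
        have hle2 := Finset.card_le_card hbU
        rw [hcb] at hle2
        rw [h2] at hle2
        omega
      obtain ⟨i0, hi0, h0⟩ := huntouched
      have hpcC : (pc : Cand β) ∈ Ctot k Aed \ w := Finset.mem_sdiff.2 ⟨pc_mem_Ctot, hpcw⟩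
      obtain ⟨x, hx⟩ := seqNext_nonempty ω pri W (Ctot k Aed) ⟨pc, hpcC⟩
      have hxCw := seqNext_subset ω pri W (Ctot k Aed) _ hx
      obtain ⟨hxC, hxw⟩ := Finset.mem_sdiff.1 hxCw
      have hxeq : marginContrib ω W w x = 2 * ω 1 :=
        le_antisymm (hbound x hxCw)
          (hmp ▸ margin_le_of_selected ω pri W (Ctot k Aed) hx hpcC)
      have hxfresh : ∃ i, i < k - 1 ∧ w ∩ CiSet i = ∅ ∧ ∃ j : Fin 3, x = cI i j := by
        rcases mem_Ctot.1 hxC with h' | ⟨e, he, h'⟩ | ⟨i, hi, j, h'⟩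
        · exfalso
          subst h'
          have hc0 : (cI i0 0 : Cand β) ∉ w := by
            intro hmem
            have : (cI i0 0 : Cand β) ∈ w ∩ CiSet i0 :=
              Finset.mem_inter.2 ⟨hmem, by simp⟩
            rw [h0] at this
            exact absurd this (Finset.notMem_empty _)
          have hmem' : (cI i0 0 : Cand β) ∈ Ctot k Aed \ w :=
            Finset.mem_sdiff.2 ⟨cI_mem_Ctot hi0 0, hc0⟩
          have hlt := margin_lt_of_selected ω pri W (Ctot k Aed) hx hmem'
            (hpri3 i0 (Finset.mem_range.2 hi0) 0)
          have heq0 : marginContrib ω W w (cI i0 0) = 2 * ω 1 :=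
            (hmc i0 hi0 0 hc0).1 h0
          rw [heq0, hxeq] at hlt
          exact lt_irrefl _ hlt
        · exfalso
          subst h'
          have := (hme e he).2
          rw [hxeq] at this
          linarith
        · subst h'
          by_cases h0' : w ∩ CiSet i = ∅
          · exact ⟨i, hi, h0', j, rfl⟩
          · exfalso
            have := (hmc i hi j hxw).2 h0'
            rw [hxeq] at this
            linarith
      obtain ⟨i, hi, hiempty, j, rfl⟩ := hxfresh
      have hsingle : seqNext ω pri W (Ctot k Aed) w = {cI i j} :=
        Finset.eq_singleton_iff_unique_mem.2
          ⟨hx, fun y hy => seqNext_subsingleton ω pri W _ hinj hy hx⟩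
      rw [seqCommittee_succ, ← hw, hsingle]
      have hunion : w ∪ {(cI i j : Cand β)} = insert (cI i j) w := by
        rw [Finset.union_comm, ← Finset.insert_eq]
      refine ⟨?_, ?_, ?_⟩
      · rw [hunion]
        exact Finset.insert_subset
          (Finset.mem_biUnion.2 ⟨i, Finset.mem_range.2 hi, by fin_cases j <;> simp⟩) h1
      · rw [hunion, Finset.card_insert_of_notMem hxw, h2]
      · intro i' hi'
        rw [hunion]
        by_cases hii : i' = i
        · subst hii
          rw [Finset.insert_inter_of_mem (by fin_cases j <;> simp), hiempty]
          simp
        · rw [Finset.insert_inter_of_notMem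
            (by intro hmem; rcases mem_CiSet.1 hmem with h' | h' | h' <;>
              exact hii ((cI_inj.1 h').1).symm)]
          exact h3 i' hi'
  obtain ⟨h1, h2, h3⟩ := hinv (k - 1) (le_refl _)
  set w := seqCommittee ω pri W (Ctot k Aed) (k - 1) with hw
  obtain ⟨hpcw, hmp, hme, hmc⟩ := key w h1 h3
  have halltouched : ∀ i, i < k - 1 → w ∩ CiSet i ≠ ∅ := by
    intro i hi
    have hbU : (Finset.range (k - 1)).biUnion (fun i => w ∩ CiSet i) = w := by
      apply Finset.Subset.antisymm
      · intro x hx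
        obtain ⟨i', -, hxi⟩ := Finset.mem_biUnion.1 hx
        exact (Finset.mem_inter.1 hxi).1
      · intro x hxw
        obtain ⟨i', hi', j, rfl⟩ := hmemF x (h1 hxw)
        refine Finset.mem_biUnion.2 ⟨i', Finset.mem_range.2 hi', Finset.mem_inter.2
          ⟨hxw, by fin_cases j <;> simp⟩⟩
    have hcb := Finset.card_biUnion (hdisjW w)
    rw [hbU, h2] at hcb
    have heach := (Finset.sum_eq_sum_iff_of_le (f := fun i => (w ∩ CiSet i).card)
      (g := fun _ => 1) h3).1 (by rw [← hcb]; simp)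
    have := heach i (Finset.mem_range.2 hi)
    intro hempty
    rw [hempty] at this
    simp at this
  have hsel : pc ∈ seqNext ω pri W (Ctot k Aed) w := by
    apply mem_seqNext_of_forall
    · exact Finset.mem_sdiff.2 ⟨pc_mem_Ctot, hpcw⟩
    · intro c' hc'
      obtain ⟨hcC, hcw⟩ := Finset.mem_sdiff.1 hc'
      rw [hmp]
      rcases mem_Ctot.1 hcC with rfl | ⟨e, he, rfl⟩ | ⟨i, hi, j, rfl⟩
      · exact le_of_eq hmp
      · have := (hme e he).2
        linarith
      · rw [(hmc i hi j hcw).2 (halltouched i hi)]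
        linarith
    · intro c' hc' hnepc
      obtain ⟨hcC, hcw⟩ := Finset.mem_sdiff.1 hc'
      rw [hmp]
      rcases mem_Ctot.1 hcC with rfl | ⟨e, he, rfl⟩ | ⟨i, hi, j, rfl⟩
      · exact absurd rfl hnepc
      · have := (hme e he).2
        linarith
      · rw [(hmc i hi j hcw).2 (halltouched i hi)]
        linarith
  have hfin : pc ∈ seqCommittee ω pri W (Ctot k Aed) ((k - 1) + 1) := by
    rw [seqCommittee_succ]
    exact Finset.mem_union_right _ hsel
  rwa [Nat.sub_add_cancel hk] at hfin

end Forward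


section Backward

lemma backward_dir {k : ℕ} {N : Finset β} {Aed : Finset (Finset β)}
    (ω : ℕ → ℝ) (hω0 : ω 0 = 0) (hmono : ∀ i, ω i ≤ ω (i + 1))
    (hω : ω 2 < 2 * ω 1) (hk : 1 ≤ k) (κ : ℕ)
    (hedge : ∀ e ∈ Aed, e.card = 2 ∧ e ⊆ N)
    (hreg : ∀ u ∈ N, (Aed.filter fun e => u ∈ e).card = 3)
    (pri : Cand β → ℕ) (hinj : Set.InjOn pri (Ctot k Aed : Set (Cand β)))
    (hpri2 : ∀ e ∈ Aed, pri (Sum.inl e : Cand β) < pri pc)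
    (hpri3 : ∀ i ∈ Finset.range (k - 1), ∀ j : Fin 3, pri (cI i j : Cand β) < pri pc)
    (V' : Multiset (Finset (Cand β))) (hV'le : V' ≤ votes k N Aed)
    (hV'card : Multiset.card V' ≤ κ)
    (hwin : pc ∈ seqCommittee ω pri (votes k N Aed - V') (Ctot k Aed) k) :
    ∃ S ⊆ N, S.card ≤ κ ∧ ∀ e ∈ Aed, (e ∩ S).Nonempty := by
  classical
  have hω1 : (0:ℝ) < ω 1 := by linarith [hmono 1]
  set W := votes k N Aed - V' with hWdef
  have hWle : W ≤ votes k N Aed := tsub_le_self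
  have hcnt : ∀ x, W.count x = (votes k N Aed).count x - V'.count x := by
    intro x
    rw [hWdef, Multiset.count_sub]
  have hcntle : ∀ x, V'.count x ≤ (votes k N Aed).count x := Multiset.le_iff_count.1 hV'le
  obtain ⟨r, hrk, hpw, hpsel⟩ := exists_selection_round ω pri W (Ctot k Aed) hwin
  set w := seqCommittee ω pri W (Ctot k Aed) r with hwd
  have hwC : w ⊆ Ctot k Aed := seqCommittee_subset ω pri W (Ctot k Aed) r
  have hwcard : w.card ≤ k - 1 := by
    have h := card_seqCommittee_le ω pri W (Ctot k Aed) hinj r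
    rw [← hwd] at h
    omega
  set dp := V'.count ({pc} : Finset (Cand β)) with hdp
  have hdple : dp ≤ 2 := by
    have := hcntle ({pc} : Finset (Cand β))
    rwa [count_votes_pc] at this
  have hmpc : marginContrib ω W w pc = ((2 - dp : ℕ) : ℝ) * ω 1 := by
    rw [margin_pc_eq ω hω0 hWle hpw, hcnt, count_votes_pc]
  -- strict comparison for candidates with smaller priority
  have hstrict : ∀ c' ∈ Ctot k Aed \ w, pri c' < pri pc →
      marginContrib ω W w c' < ((2 - dp : ℕ) : ℝ) * ω 1 := by
    intro c' hc' hp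
    rw [← hmpc]
    exact margin_lt_of_selected ω pri W (Ctot k Aed) hpsel hc' hp
  -- pieces of the cover
  set M := Aed.filter (fun e => (Sum.inl e : Cand β) ∈ w) with hM
  set D := N.filter (fun u => 1 ≤ V'.count (vvote Aed u)) with hD
  set S := D ∪ M.biUnion id with hS
  have hSN : S ⊆ N := by
    intro x hx
    rcases Finset.mem_union.1 hx with hx | hx
    · exact Finset.mem_of_mem_filter x hx
    · obtain ⟨e, heM, hxe⟩ := Finset.mem_biUnion.1 hx
      exact (hedge e (Finset.mem_of_mem_filter e heM)).2 hxe
  -- the cover property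
  have hcov : ∀ e ∈ Aed, (e ∩ S).Nonempty := by
    intro e he
    by_cases hMe : e ∈ M
    · obtain ⟨x, y, hne, heq⟩ := Finset.card_eq_two.1 (hedge e he).1
      refine ⟨x, Finset.mem_inter.2 ⟨by simp [heq], ?_⟩⟩
      exact Finset.mem_union.2 (Or.inr (Finset.mem_biUnion.2 ⟨e, hMe, by simp [heq]⟩))
    · have hew : (Sum.inl e : Cand β) ∉ w := by
        intro hmem
        exact hMe (Finset.mem_filter.2 ⟨he, hmem⟩)
      by_contra hes
      rw [Finset.not_nonempty_iff_eq_empty] at hes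
      obtain ⟨u1, u2, hne, heq⟩ := Finset.card_eq_two.1 (hedge e he).1
      have hu1N : u1 ∈ N := (hedge e he).2 (by simp [heq])
      have hu2N : u2 ∈ N := (hedge e he).2 (by simp [heq])
      have hnotS : ∀ u, u ∈ e → u ∉ S := by
        intro u hue huS
        have : u ∈ e ∩ S := Finset.mem_inter.2 ⟨hue, huS⟩
        rw [hes] at this
        exact Finset.notMem_empty _ this
      have hcW : ∀ u, u ∈ e → u ∈ N → W.count (vvote Aed u) = 1 := by
        intro u hue huN
        have hnD : u ∉ D := fun hd => hnotS u hue (Finset.mem_union.2 (Or.inl hd))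
        have h0 : V'.count (vvote Aed u) = 0 := by
          by_contra hpos
          exact hnD (Finset.mem_filter.2 ⟨huN, by omega⟩)
        rw [hcnt, h0, count_votes_vvote hedge hreg huN]
      have hint : ∀ u, u ∈ e → vvote Aed u ∩ w = ∅ := by
        intro u hue
        rw [Finset.eq_empty_iff_forall_notMem]
        intro x hx
        obtain ⟨hx1, hx2⟩ := Finset.mem_inter.1 hx
        obtain ⟨e', he', rfl⟩ := Finset.mem_image.1 hx1
        have he'A : e' ∈ Aed := (Finset.mem_filter.1 he').1
        have hue' : u ∈ e' := (Finset.mem_filter.1 he').2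
        have he'M : e' ∈ M := Finset.mem_filter.2 ⟨he'A, hx2⟩
        exact hnotS u hue (Finset.mem_union.2 (Or.inr
          (Finset.mem_biUnion.2 ⟨e', he'M, hue'⟩)))
      have hmem' : (Sum.inl e : Cand β) ∈ Ctot k Aed \ w :=
        Finset.mem_sdiff.2 ⟨inl_mem_Ctot he, hew⟩
      have hlt := hstrict _ hmem' (hpri2 e he)
      rw [margin_edge_eq ω hWle hedge hreg he hne heq hew,
        hint u1 (by simp [heq]), hint u2 (by simp [heq]),
        hcW u1 (by simp [heq]) hu1N, hcW u2 (by simp [heq]) hu2N] at hlt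
      simp only [Finset.card_empty, hω0, sub_zero, zero_add, Nat.cast_one, one_mul] at hlt
      have hd2 : ((2 - dp : ℕ) : ℝ) ≤ 2 := by
        have : (2 - dp : ℕ) ≤ 2 := by omega
        exact_mod_cast Nat.cast_le.2 this
      nlinarith
  -- untouched blocks require at least two deletions
  set untouched := (Finset.range (k - 1)).filter (fun i => w ∩ CiSet i = ∅) with hU
  have hblk : ∀ i ∈ untouched,
      2 ≤ V'.count (tv i 0 1) + V'.count (tv i 0 2) + V'.count (tv i 1 2) := by
    intro i hiu
    obtain ⟨hirange, hempty⟩ := Finset.mem_filter.1 hiu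
    have hik : i < k - 1 := Finset.mem_range.1 hirange
    have hnw : ∀ j : Fin 3, (cI i j : Cand β) ∉ w := by
      intro j hmem
      have : (cI i j : Cand β) ∈ w ∩ CiSet i :=
        Finset.mem_inter.2 ⟨hmem, by fin_cases j <;> simp⟩
      rw [hempty] at this
      exact Finset.notMem_empty _ this
    have hintv : ∀ a b : Fin 3, (tv i a b : Finset (Cand β)) ∩ w = ∅ := by
      intro a b
      rw [inter_comm_sub (tv_subset_CiSet), hempty, Finset.inter_empty]
    have hmem' : ∀ j : Fin 3, (cI i j : Cand β) ∈ Ctot k Aed \ w := fun j =>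
      Finset.mem_sdiff.2 ⟨cI_mem_Ctot hik j, hnw j⟩
    have hget : ∀ a b : Fin 3,
        ((a, b) = ((0:Fin 3), (1:Fin 3)) ∨ (a, b) = (0, 2) ∨ (a, b) = (1, 2)) →
        W.count (tv i a b) = 1 - V'.count (tv i a b) ∧ V'.count (tv i a b) ≤ 1 := by
      intro a b hab
      constructor
      · rw [hcnt, count_votes_tv hik hab]
      · have := hcntle (tv i a b)
        rwa [count_votes_tv hik hab] at this
    obtain ⟨hc01, hx01⟩ := hget 0 1 (by tauto)
    obtain ⟨hc02, hx02⟩ := hget 0 2 (by tauto)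
    obtain ⟨hc12, hx12⟩ := hget 1 2 (by tauto)
    have hnat : ∀ a b : ℕ, ((a : ℝ) * ω 1 + (b : ℝ) * ω 1 < ((2 - dp : ℕ) : ℝ) * ω 1) →
        a + b < 2 - dp := by
      intro a b hab
      have : ((a + b : ℕ) : ℝ) < ((2 - dp : ℕ) : ℝ) := by
        push_cast
        nlinarith
      exact_mod_cast this
    have h0 := hstrict _ (hmem' 0) (hpri3 i hirange 0)
    rw [margin_cI0_eq ω hWle (hnw 0), hintv 0 1, hintv 0 2] at h0
    simp only [Finset.card_empty, hω0, sub_zero, zero_add] at h0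
    have h0' := hnat _ _ h0
    have h1 := hstrict _ (hmem' 1) (hpri3 i hirange 1)
    rw [margin_cI1_eq ω hWle (hnw 1), hintv 0 1, hintv 1 2] at h1
    simp only [Finset.card_empty, hω0, sub_zero, zero_add] at h1
    have h1' := hnat _ _ h1
    have h2 := hstrict _ (hmem' 2) (hpri3 i hirange 2)
    rw [margin_cI2_eq ω hWle (hnw 2), hintv 0 2, hintv 1 2] at h2
    simp only [Finset.card_empty, hω0, sub_zero, zero_add] at h2
    have h2' := hnat _ _ h2
    rw [hc01, hc02] at h0'
    rw [hc01, hc12] at h1'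
    rw [hc02, hc12] at h2'
    omega
  -- counting deleted votes
  have hDcount : ∀ u ∈ D, 1 ≤ V'.count (vvote Aed u) := fun u hu =>
    (Finset.mem_filter.1 hu).2
  have hDN : D ⊆ N := Finset.filter_subset _ _
  set T := (D.image (vvote Aed)) ∪ untouched.biUnion
    (fun i => ({tv i 0 1, tv i 0 2, tv i 1 2} : Finset (Finset (Cand β)))) with hT
  have hTdisj : Disjoint (D.image (vvote Aed)) (untouched.biUnion
      (fun i => ({tv i 0 1, tv i 0 2, tv i 1 2} : Finset (Finset (Cand β))))) := by
    rw [Finset.disjoint_left]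
    intro x hx1 hx2
    obtain ⟨u, -, rfl⟩ := Finset.mem_image.1 hx1
    obtain ⟨i, -, hx3⟩ := Finset.mem_biUnion.1 hx2
    rcases Finset.mem_insert.1 hx3 with h | h
    · exact vvote_ne_tv h
    · rcases Finset.mem_insert.1 h with h | h
      · exact vvote_ne_tv h
      · exact vvote_ne_tv (Finset.mem_singleton.1 h)
  have hTsum : ∑ x ∈ T, V'.count x ≤ Multiset.card V' := sum_count_le' T V'
  have hTsum2 : ∑ x ∈ T, V'.count x
      = ∑ x ∈ D.image (vvote Aed), V'.count x
        + ∑ i ∈ untouched, ∑ x ∈ ({tv i 0 1, tv i 0 2, tv i 1 2} :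
            Finset (Finset (Cand β))), V'.count x := by
    rw [hT, Finset.sum_union hTdisj, Finset.sum_biUnion]
    intro i hi i' hi' hne
    simp only [Finset.disjoint_left]
    intro x hx1 hx2
    simp only [Finset.mem_insert, Finset.mem_singleton] at hx1 hx2
    have : ∃ a b : Fin 3, x = tv i a b := by
      rcases hx1 with rfl | rfl | rfl
      exacts [⟨0, 1, rfl⟩, ⟨0, 2, rfl⟩, ⟨1, 2, rfl⟩]
    obtain ⟨a, b, rfl⟩ := this
    rcases hx2 with h | h | h <;> exact tv_ne_tv_of_ne hne h
  have hDsum : (D.card : ℕ) ≤ ∑ x ∈ D.image (vvote Aed), V'.count x := by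
    rw [Finset.sum_image (fun x hx y hy hxy => vvote_inj hedge hreg (hDN hx) hxy)]
    calc D.card = ∑ _u ∈ D, 1 := by simp
      _ ≤ _ := Finset.sum_le_sum hDcount
  have hUsum : 2 * untouched.card ≤ ∑ i ∈ untouched, ∑ x ∈ ({tv i 0 1, tv i 0 2, tv i 1 2} :
      Finset (Finset (Cand β))), V'.count x := by
    calc 2 * untouched.card = ∑ _i ∈ untouched, 2 := by
          rw [Finset.sum_const, smul_eq_mul, mul_comm]
      _ ≤ _ := Finset.sum_le_sum (by
          intro i hi
          have e1 : (tv i 0 1 : Finset (Cand β)) ≠ tv i 0 2 := tv_ne_tv 1 (by simp) (by decide)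
          have e2 : (tv i 0 1 : Finset (Cand β)) ≠ tv i 1 2 := tv_ne_tv 0 (by simp) (by decide)
          have e3 : (tv i 0 2 : Finset (Cand β)) ≠ tv i 1 2 := tv_ne_tv 0 (by simp) (by decide)
          rw [Finset.sum_insert (by simp [e1, e2]), Finset.sum_insert (by simp [e3]),
            Finset.sum_singleton]
          have := hblk i hi
          omega)
  have hmoney : D.card + 2 * untouched.card ≤ κ := by
    have := le_trans (le_of_eq hTsum2.symm) hTsum
    omega
  -- committee structure: card M + card touched ≤ card w
  set touched := (Finset.range (k - 1)).filter (fun i => (w ∩ CiSet i).Nonempty) with htc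
  have htu : touched.card + untouched.card = k - 1 := by
    have h1 : untouched = (Finset.range (k - 1)).filter
        (fun i => ¬ (w ∩ CiSet i).Nonempty) := by
      apply Finset.filter_congr
      intro i _
      rw [Finset.not_nonempty_iff_eq_empty]
    rw [h1, htc]
    rw [Finset.card_filter_add_card_filter_not, Finset.card_range]
  have hpick : ∀ i ∈ touched, ∃ x, x ∈ w ∩ CiSet i := by
    intro i hi
    exact (Finset.mem_filter.1 hi).2
  classical
  let pick : ℕ → Cand β := fun i =>
    if h : (w ∩ CiSet i).Nonempty then h.choose else pc
  have hpickmem : ∀ i ∈ touched, pick i ∈ w ∩ CiSet i := by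
    intro i hi
    have h := (Finset.mem_filter.1 hi).2
    simp only [pick, dif_pos h]
    exact h.choose_spec
  have hpickinj : ∀ i ∈ touched, ∀ i' ∈ touched, pick i = pick i' → i = i' := by
    intro i hi i' hi' heq
    have h1 := (Finset.mem_inter.1 (hpickmem i hi)).2
    have h2 := (Finset.mem_inter.1 (hpickmem i' hi')).2
    rw [heq] at h1
    rcases mem_CiSet.1 h1 with h | h | h <;> rcases mem_CiSet.1 h2 with h' | h' | h' <;>
      · rw [h'] at h
        exact ((cI_inj.1 h).1).symm
  have hMw : (M.image Sum.inl : Finset (Cand β)) ⊆ w := by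
    intro x hx
    obtain ⟨e, he, rfl⟩ := Finset.mem_image.1 hx
    exact (Finset.mem_filter.1 he).2
  have hPw : touched.image pick ⊆ w := by
    intro x hx
    obtain ⟨i, hi, rfl⟩ := Finset.mem_image.1 hx
    exact (Finset.mem_inter.1 (hpickmem i hi)).1
  have hMPdisj : Disjoint (M.image Sum.inl : Finset (Cand β)) (touched.image pick) := by
    rw [Finset.disjoint_left]
    intro x hx1 hx2
    obtain ⟨e, -, rfl⟩ := Finset.mem_image.1 hx1
    obtain ⟨i, hi, hpeq⟩ := Finset.mem_image.1 hx2
    have := (Finset.mem_inter.1 (hpickmem i hi)).2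
    rw [hpeq] at this
    rcases mem_CiSet.1 this with h | h | h <;> exact inl_ne_cI h
  have hMcard : M.card + touched.card ≤ w.card := by
    have hsub : (M.image Sum.inl : Finset (Cand β)) ∪ touched.image pick ⊆ w :=
      Finset.union_subset hMw hPw
    have := Finset.card_le_card hsub
    rw [Finset.card_union_of_disjoint hMPdisj,
      Finset.card_image_of_injOn (fun x _ y _ h => Sum.inl.inj h),
      Finset.card_image_of_injOn hpickinj] at this
    exact this
  have hScard : S.card ≤ κ := by
    have h1 : S.card ≤ D.card + (M.biUnion id).card := by
      rw [hS]
      exact (Finset.card_union_le _ _)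
    have h2 : (M.biUnion id).card ≤ ∑ e ∈ M, e.card := by
      have := Finset.card_biUnion_le (s := M) (t := id)
      simpa using this
    have h3 : ∑ e ∈ M, e.card = 2 * M.card := by
      rw [Finset.sum_congr rfl (fun e he => (hedge e (Finset.mem_of_mem_filter e he)).1)]
      rw [Finset.sum_const, smul_eq_mul, mul_comm]
    have h4 : M.card ≤ untouched.card := by omega
    omega
  exact ⟨S, hSN, hScard, hcov⟩

end Backward

/-- correctness of the reduction from Vertex Cover on 3-regular graphs to
constructive control by deleting voters for sequential ω-Thiele rules with
`ω(2) < 2ω(1)`. -/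
theorem ccdv_seq_thiele (ω : ℕ → ℝ) (hω0 : ω 0 = 0) (hmono : ∀ i, ω i ≤ ω (i + 1))
    (hω : ω 2 < 2 * ω 1)
    (k : ℕ) (hk : 1 ≤ k) (κ : ℕ) (hκ : 1 ≤ κ)
    (N : Finset β) (Aed : Finset (Finset β))
    (hedge : ∀ e ∈ Aed, e.card = 2 ∧ e ⊆ N)
    (hreg : ∀ u ∈ N, (Aed.filter fun e => u ∈ e).card = 3)
    (hA2 : 2 ≤ Aed.card)
    (pri : Cand β → ℕ) (hinj : Set.InjOn pri (Ctot k Aed : Set (Cand β)))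
    (hpri1 : ∀ i ∈ Finset.range (k - 1), ∀ j : Fin 3, ∀ e ∈ Aed,
      pri (cI i j) < pri (Sum.inl e : Cand β))
    (hpri2 : ∀ e ∈ Aed, pri (Sum.inl e : Cand β) < pri pc)
    (hpri3 : ∀ i ∈ Finset.range (k - 1), ∀ j : Fin 3, pri (cI i j : Cand β) < pri pc) :
    (∃ S ⊆ N, S.card ≤ κ ∧ ∀ e ∈ Aed, (e ∩ S).Nonempty) ↔
      (∃ V' ≤ votes k N Aed, Multiset.card V' ≤ κ ∧
        pc ∈ seqCommittee ω pri (votes k N Aed - V') (Ctot k Aed) k) := by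
  constructor
  · rintro ⟨S, hSN, hScard, hcov⟩
    refine ⟨S.val.map (vvote Aed), ?_, ?_, ?_⟩
    · rw [votes_eq]
      calc S.val.map (vvote Aed) ≤ N.val.map (vvote Aed) :=
            Multiset.map_le_map (Finset.val_le_iff.2 hSN)
        _ ≤ _ := le_trans (Multiset.le_add_left _ _) (Multiset.le_add_right _ _)
    · rw [Multiset.card_map]
      exact hScard
    · exact forward_dir ω hω0 hmono hω hk hedge hreg pri hinj hpri3 S hSN hcov
  · rintro ⟨V', hV'le, hV'card, hwin⟩
    exact backward_dir ω hω0 hmono hω hk κ hedge hreg pri hinj hpri2 hpri3 V' hV'le hV'card hwin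

end Stmt5
end

section
/- Let ω be a Thiele function with Δω(i) < ω(1) for each i ∈ {1, 2, 3}, and let (A, H) be an RX3C instance: |A| = |H| = 3κ for an integer κ ≥ 1, every member of H is a 3-element subset of A, and every a ∈ A belongs to exactly three members of H. Construct the election with candidates: c(a) for each a ∈ A, c(H) for each H ∈ H, and a fresh candidate p; and votes V: one vote {p}; for each a ∈ A, one vote v(a) = {c(a)} ∪ {c(H) : a ∈ H ∈ H}; and for each H ∈ H, one vote {c(H)}. Let k = κ + 1, and fix any tie-breaking linear order ⊳ placing all candidates c(H) first, then all candidates c(a), then p last. Then H contains an exact set cover of A (κ pairwise disjoint members whose union is A) if and only if there exists C' ⊆ C ∖ {p} with |C'| ≤ 2κ such that p belongs to the seqω winning (κ+1)-committee of (C ∖ C', V_{C∖C'}) with respect to ⊳. -/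
open Finset

attribute [local instance] Classical.propDecidable

universe u

variable {α : Type u}

namespace Stmt7

variable {β : Type u} [DecidableEq β]

/-- Candidate type: a candidate `c(a)` for `a ∈ A`, a candidate `c(H)` for `H ∈ 𝓗`,
or the distinguished candidate `p`. -/
abbrev Cand (β : Type u) := β ⊕ Finset β ⊕ Unit

/-- The distinguished candidate `p`. -/
def pc : Cand β := Sum.inr (Sum.inr ())

/-- The candidate `c(H)`. -/
def cH (s : Finset β) : Cand β := Sum.inr (Sum.inl s)

/-- The whole candidate set. -/
def Ctot (A : Finset β) (H : Finset (Finset β)) : Finset (Cand β) :=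
  insert pc (A.image Sum.inl ∪ H.image cH)

/-- The votes: `{p}`; for each `a ∈ A`, `v(a) = {c(a)} ∪ {c(H) : a ∈ H ∈ 𝓗}`; and for
each `H ∈ 𝓗`, the vote `{c(H)}`. -/
def votes (A : Finset β) (H : Finset (Finset β)) : Multiset (Finset (Cand β)) :=
  ({pc} : Finset (Cand β)) ::ₘ
    (A.val.map (fun a => insert (Sum.inl a) ((H.filter fun s => a ∈ s).image cH))
      + H.val.map (fun s => ({cH s} : Finset (Cand β))))

set_option linter.unusedSectionVars false
section Aux
variable {β : Type u} [DecidableEq β]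

/-- The vote of a ground element. -/
def va (H : Finset (Finset β)) (a : β) : Finset (Cand β) :=
  insert (Sum.inl a) ((H.filter fun s => a ∈ s).image cH)

lemma cH_injective : Function.Injective (cH (β := β)) := fun a b h => by
  simpa [cH] using h

@[simp] lemma pc_notMem_va (H : Finset (Finset β)) (a : β) : (pc : Cand β) ∉ va H a := by
  simp [va, pc, cH]

@[simp] lemma pc_notMem_scH (s : Finset β) : (pc : Cand β) ∉ ({cH s} : Finset (Cand β)) := by
  simp [pc, cH]

@[simp] lemma inl_mem_va_iff (H : Finset (Finset β)) (a b : β) :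
    (Sum.inl b : Cand β) ∈ va H a ↔ b = a := by simp [va, cH]

@[simp] lemma cH_mem_va_iff (H : Finset (Finset β)) (a : β) (t : Finset β) :
    (cH t : Cand β) ∈ va H a ↔ t ∈ H ∧ a ∈ t := by
  constructor
  · intro h
    rcases Finset.mem_insert.1 h with h | h
    · simp [cH] at h
    · rcases Finset.mem_image.1 h with ⟨s, hs, he⟩
      rcases cH_injective he
      exact Finset.mem_filter.1 hs
  · intro ⟨h1, h2⟩
    exact Finset.mem_insert_of_mem (Finset.mem_image_of_mem _ (Finset.mem_filter.2 ⟨h1, h2⟩))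

@[simp] lemma inl_notMem_scH (s : Finset β) (b : β) :
    (Sum.inl b : Cand β) ∉ ({cH s} : Finset (Cand β)) := by simp [cH]

@[simp] lemma cH_mem_scH_iff (s t : Finset β) :
    (cH t : Cand β) ∈ ({cH s} : Finset (Cand β)) ↔ t = s := by
  simp [cH_injective.eq_iff]

@[simp] lemma pc_ne_cH (s : Finset β) : (pc : Cand β) ≠ cH s := by simp [pc, cH]
@[simp] lemma pc_ne_inl (a : β) : (pc : Cand β) ≠ Sum.inl a := by simp [pc]
@[simp] lemma inl_ne_cH (a : β) (s : Finset β) : (Sum.inl a : Cand β) ≠ cH s := by simp [cH]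

lemma mem_Ctot {A : Finset β} {H : Finset (Finset β)} {c : Cand β} :
    c ∈ Ctot A H ↔ c = pc ∨ (∃ a ∈ A, c = Sum.inl a) ∨ ∃ s ∈ H, c = cH s := by
  simp [Ctot, eq_comm]

lemma thiele_votes (ω : ℕ → ℝ) (A : Finset β) (H : Finset (Finset β)) (w : Finset (Cand β)) :
    thieleScore ω (votes A H) w =
      ω ((({pc} : Finset (Cand β)) ∩ w).card)
        + ((∑ a ∈ A, ω ((va H a ∩ w).card))
        + ∑ s ∈ H, ω ((({cH s} : Finset (Cand β)) ∩ w).card)) := by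
  simp only [thieleScore, votes, Multiset.map_cons, Multiset.sum_cons, Multiset.map_add,
    Multiset.sum_add, Multiset.map_map, Function.comp]
  rfl

lemma inter_insert_card {c : Cand β} {w : Finset (Cand β)} (hc : c ∉ w) (v : Finset (Cand β)) :
    (v ∩ insert c w).card = if c ∈ v then (v ∩ w).card + 1 else (v ∩ w).card := by
  by_cases h : c ∈ v
  · rw [if_pos h, Finset.inter_comm, Finset.insert_inter_of_mem h, Finset.inter_comm,
      Finset.card_insert_of_notMem (by simp [hc])]
  · rw [if_neg h, Finset.inter_comm, Finset.insert_inter_of_notMem h, Finset.inter_comm]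

end Aux
section Aux2
variable {β : Type u} [DecidableEq β]

lemma delta_term (ω : ℕ → ℝ) {c : Cand β} {w : Finset (Cand β)} (hc : c ∉ w)
    (v : Finset (Cand β)) :
    ω ((v ∩ insert c w).card) =
      ω ((v ∩ w).card) + (if c ∈ v then ω ((v ∩ w).card + 1) - ω ((v ∩ w).card) else 0) := by
  rw [inter_insert_card hc]
  by_cases h : c ∈ v <;> simp [h]

lemma margin_votes (ω : ℕ → ℝ) (A : Finset β) (H : Finset (Finset β))
    {c : Cand β} {w : Finset (Cand β)} (hc : c ∉ w) :
    marginContrib ω (votes A H) w c =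
      (if c ∈ ({pc} : Finset (Cand β)) then
          ω ((({pc} : Finset (Cand β)) ∩ w).card + 1) - ω ((({pc} : Finset (Cand β)) ∩ w).card)
        else 0)
      + ((∑ a ∈ A, if c ∈ va H a then
            ω ((va H a ∩ w).card + 1) - ω ((va H a ∩ w).card) else 0)
      + ∑ s ∈ H, if c ∈ ({cH s} : Finset (Cand β)) then
            ω ((({cH s} : Finset (Cand β)) ∩ w).card + 1)
              - ω ((({cH s} : Finset (Cand β)) ∩ w).card) else 0) := by
  unfold marginContrib
  rw [thiele_votes, thiele_votes, delta_term ω hc]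
  have h1 : ∀ a ∈ A, ω ((va H a ∩ insert c w).card) =
      ω ((va H a ∩ w).card)
        + (if c ∈ va H a then ω ((va H a ∩ w).card + 1) - ω ((va H a ∩ w).card) else 0) :=
    fun a _ => delta_term ω hc _
  have h2 : ∀ s ∈ H, ω ((({cH s} : Finset (Cand β)) ∩ insert c w).card) =
      ω ((({cH s} : Finset (Cand β)) ∩ w).card)
        + (if c ∈ ({cH s} : Finset (Cand β)) then
            ω ((({cH s} : Finset (Cand β)) ∩ w).card + 1)
              - ω ((({cH s} : Finset (Cand β)) ∩ w).card) else 0) :=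
    fun s _ => delta_term ω hc _
  rw [Finset.sum_congr rfl h1, Finset.sum_congr rfl h2, Finset.sum_add_distrib,
    Finset.sum_add_distrib]
  ring

end Aux2
section Aux3
variable {β : Type u} [DecidableEq β]
variable (ω : ℕ → ℝ) (A : Finset β) (H : Finset (Finset β))

lemma margin_pc (hω0 : ω 0 = 0) {w : Finset (Cand β)} (hw : (pc : Cand β) ∉ w) :
    marginContrib ω (votes A H) w pc = ω 1 := by
  rw [margin_votes ω A H hw]
  simp [Finset.singleton_inter_of_notMem hw, hω0]

lemma margin_cH (hω0 : ω 0 = 0) {t : Finset β} (ht : t ∈ H) {w : Finset (Cand β)}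
    (hw : (cH t : Cand β) ∉ w) :
    marginContrib ω (votes A H) w (cH t) =
      ω 1 + ∑ a ∈ A, (if a ∈ t then
        ω ((va H a ∩ w).card + 1) - ω ((va H a ∩ w).card) else 0) := by
  rw [margin_votes ω A H hw]
  have hne : (cH t : Cand β) ≠ pc := (pc_ne_cH t).symm
  simp [ht, hne, cH_injective.eq_iff, Finset.sum_ite_eq, Finset.singleton_inter_of_notMem hw,
    hω0, add_comm]

lemma margin_inl {a0 : β} (ha : a0 ∈ A) {w : Finset (Cand β)}
    (hw : (Sum.inl a0 : Cand β) ∉ w) :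
    marginContrib ω (votes A H) w (Sum.inl a0) =
      ω ((va H a0 ∩ w).card + 1) - ω ((va H a0 ∩ w).card) := by
  rw [margin_votes ω A H hw]
  simp [ha, pc, Finset.sum_ite_eq]

end Aux3
section Aux4
variable {γ : Type u} [DecidableEq γ]
variable (ω : ℕ → ℝ) (pri : γ → ℕ) (V : Multiset (Finset γ)) (C : Finset γ)

lemma thiele_restrict (D w : Finset γ) (hw : w ⊆ D) :
    thieleScore ω (V.map (· ∩ D)) w = thieleScore ω V w := by
  unfold thieleScore
  rw [Multiset.map_map]
  apply congrArg
  apply Multiset.map_congr rfl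
  intro v _
  have : v ∩ D ∩ w = v ∩ w := by
    rw [Finset.inter_assoc, Finset.inter_eq_right.2 hw]
  simp [Function.comp, this]

lemma margin_restrict {D w : Finset γ} {c : γ} (hw : w ⊆ D) (hc : c ∈ D) :
    marginContrib ω (V.map (· ∩ D)) w c = marginContrib ω V w c := by
  unfold marginContrib
  rw [thiele_restrict ω V D w hw, thiele_restrict ω V D _ (Finset.insert_subset hc hw)]

lemma seqNext_subset (w : Finset γ) : seqNext ω pri V C w ⊆ C \ w :=
  (Finset.filter_subset _ _).trans (Finset.filter_subset _ _)

lemma seqNext_subsingleton (hinj : Set.InjOn pri (C : Set γ)) (w : Finset γ)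
    {x y : γ} (hx : x ∈ seqNext ω pri V C w) (hy : y ∈ seqNext ω pri V C w) : x = y := by
  obtain ⟨hx1, hx2⟩ := Finset.mem_filter.1 hx
  obtain ⟨hy1, hy2⟩ := Finset.mem_filter.1 hy
  have hxy : pri x = pri y := le_antisymm (hx2 y hy1) (hy2 x hx1)
  have hxC : x ∈ C := (Finset.mem_sdiff.1 (Finset.filter_subset _ _ hx1)).1
  have hyC : y ∈ C := (Finset.mem_sdiff.1 (Finset.filter_subset _ _ hy1)).1
  exact hinj hxC hyC hxy

lemma seqNext_nonempty {w : Finset γ} (h : (C \ w).Nonempty) :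
    (seqNext ω pri V C w).Nonempty := by
  obtain ⟨b, hb, hmax⟩ := Finset.exists_max_image (C \ w) (marginContrib ω V w) h
  have hbm : b ∈ maxMarginSet ω V C w := Finset.mem_filter.2 ⟨hb, hmax⟩
  obtain ⟨m, hm, hmin⟩ := Finset.exists_min_image (maxMarginSet ω V C w) pri ⟨b, hbm⟩
  exact ⟨m, Finset.mem_filter.2 ⟨hm, hmin⟩⟩

lemma seqCommittee_subset (n : ℕ) : seqCommittee ω pri V C n ⊆ C := by
  induction n with
  | zero => simp [seqCommittee]
  | succ n ih =>
    exact Finset.union_subset ih ((seqNext_subset ω pri V C _).trans Finset.sdiff_subset)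

lemma seqNext_card_le_one (hinj : Set.InjOn pri (C : Set γ)) (w : Finset γ) :
    (seqNext ω pri V C w).card ≤ 1 :=
  Finset.card_le_one.2 fun _ ha _ hb => seqNext_subsingleton ω pri V C hinj w ha hb

lemma seqCommittee_card_le (hinj : Set.InjOn pri (C : Set γ)) (n : ℕ) :
    (seqCommittee ω pri V C n).card ≤ n := by
  induction n with
  | zero => simp [seqCommittee]
  | succ n ih =>
    calc (seqCommittee ω pri V C (n + 1)).card
        ≤ (seqCommittee ω pri V C n).card + (seqNext ω pri V C (seqCommittee ω pri V C n)).card :=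
          Finset.card_union_le _ _
      _ ≤ n + 1 := add_le_add ih (seqNext_card_le_one ω pri V C hinj _)

lemma mem_seqCommittee_exists {c : γ} {n : ℕ} (h : c ∈ seqCommittee ω pri V C n) :
    ∃ j < n, c ∈ seqNext ω pri V C (seqCommittee ω pri V C j) := by
  induction n with
  | zero => simp [seqCommittee] at h
  | succ n ih =>
    rcases Finset.mem_union.1 h with h | h
    · obtain ⟨j, hj, hjm⟩ := ih h
      exact ⟨j, Nat.lt_succ_of_lt hj, hjm⟩
    · exact ⟨n, Nat.lt_succ_self n, h⟩

end Aux4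

section Aux5
variable {β : Type u} [DecidableEq β]
variable {ω : ℕ → ℝ} (A : Finset β) (H : Finset (Finset β))

lemma omega1_pos (hmono : ∀ i, ω i ≤ ω (i + 1))
    (hΔ : ∀ i : ℕ, 1 ≤ i → i ≤ 3 → ω (i + 1) - ω i < ω 1) : 0 < ω 1 := by
  have h1 := hΔ 1 le_rfl (by norm_num)
  have h2 := hmono 1
  linarith

lemma delta_le (hω0 : ω 0 = 0) (hmono : ∀ i, ω i ≤ ω (i + 1))
    (hΔ : ∀ i : ℕ, 1 ≤ i → i ≤ 3 → ω (i + 1) - ω i < ω 1) {n : ℕ} (hn : n ≤ 3) :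
    ω (n + 1) - ω n ≤ ω 1 := by
  rcases Nat.eq_zero_or_pos n with rfl | hpos
  · simp [hω0]
  · exact le_of_lt (hΔ n hpos hn)

lemma margin_cH_ge (hω0 : ω 0 = 0) (hmono : ∀ i, ω i ≤ ω (i + 1))
    {t : Finset β} (ht : t ∈ H) {w : Finset (Cand β)} (hw : (cH t : Cand β) ∉ w) :
    ω 1 ≤ marginContrib ω (votes A H) w (cH t) := by
  rw [margin_cH ω A H hω0 ht hw]
  have : (0:ℝ) ≤ ∑ a ∈ A, (if a ∈ t then
      ω ((va H a ∩ w).card + 1) - ω ((va H a ∩ w).card) else 0) := by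
    apply Finset.sum_nonneg
    intro a _
    split
    · linarith [hmono ((va H a ∩ w).card)]
    · exact le_rfl
  linarith

lemma margin_cH_eq_four (hω0 : ω 0 = 0) {t : Finset β} (ht : t ∈ H) (htA : t ⊆ A)
    (ht3 : t.card = 3) {w : Finset (Cand β)} (hw : (cH t : Cand β) ∉ w)
    (hva : ∀ a ∈ t, va H a ∩ w = ∅) :
    marginContrib ω (votes A H) w (cH t) = ω 1 + 3 * ω 1 := by
  rw [margin_cH ω A H hω0 ht hw]
  have h1 : ∀ a ∈ A, (if a ∈ t then
      ω ((va H a ∩ w).card + 1) - ω ((va H a ∩ w).card) else 0)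
      = if a ∈ t then ω 1 else 0 := by
    intro a _
    split
    · next hat => rw [hva a hat]; simp [hω0]
    · rfl
  rw [Finset.sum_congr rfl h1, Finset.sum_ite_mem, Finset.sum_const,
    Finset.inter_eq_right.2 htA, ht3]
  push_cast
  ring

end Aux5
/-- correctness of the reduction from RX3C to constructive control by
deleting candidates for sequential ω-Thiele rules with `Δω(i) < ω(1)` for `i ∈ {1,2,3}`. -/
theorem ccdc_seq_thiele (ω : ℕ → ℝ) (hω0 : ω 0 = 0) (hmono : ∀ i, ω i ≤ ω (i + 1))
    (hΔ : ∀ i : ℕ, 1 ≤ i → i ≤ 3 → ω (i + 1) - ω i < ω 1)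
    (κ : ℕ) (hκ : 1 ≤ κ)
    (A : Finset β) (H : Finset (Finset β))
    (hA : A.card = 3 * κ) (hHcard : H.card = 3 * κ)
    (hH3 : ∀ s ∈ H, s ⊆ A ∧ s.card = 3)
    (hocc : ∀ a ∈ A, (H.filter fun s => a ∈ s).card = 3)
    (pri : Cand β → ℕ) (hinj : Set.InjOn pri (Ctot A H : Set (Cand β)))
    (hpri1 : ∀ s ∈ H, ∀ a ∈ A, pri (cH s : Cand β) < pri (Sum.inl a : Cand β))
    (hpri2 : ∀ a ∈ A, pri (Sum.inl a : Cand β) < pri pc)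
    (hpri3 : ∀ s ∈ H, pri (cH s : Cand β) < pri pc) :
    (∃ H' ⊆ H, H'.card = κ ∧ (∀ s ∈ H', ∀ t ∈ H', s ≠ t → Disjoint s t) ∧
        H'.biUnion (fun s => s) = A) ↔
      (∃ C' ⊆ Ctot A H \ {pc}, C'.card ≤ 2 * κ ∧
        pc ∈ seqCommittee ω pri ((votes A H).map (· ∩ (Ctot A H \ C')))
              (Ctot A H \ C') (κ + 1)) := by
  have hω1 : 0 < ω 1 := omega1_pos hmono hΔ
  constructor
  · -- forward direction
    rintro ⟨H', hH'sub, hH'card, hdisj, hunion⟩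
    classical
    set C' : Finset (Cand β) := (H \ H').image cH with hC'def
    set D : Finset (Cand β) := Ctot A H \ C' with hDdef
    set V' : Multiset (Finset (Cand β)) := (votes A H).map (· ∩ D) with hV'def
    have hC'sub : C' ⊆ Ctot A H \ {pc} := by
      intro x hx
      obtain ⟨s, hs, rfl⟩ := Finset.mem_image.1 hx
      refine Finset.mem_sdiff.2 ⟨mem_Ctot.2 (Or.inr (Or.inr ⟨s, (Finset.mem_sdiff.1 hs).1, rfl⟩)), ?_⟩
      simp [(pc_ne_cH s).symm]
    have hC'card : C'.card = 2 * κ := by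
      rw [hC'def, Finset.card_image_of_injective _ cH_injective,
        Finset.card_sdiff_of_subset hH'sub, hHcard, hH'card]
      omega
    have hpcD : (pc : Cand β) ∈ D := by
      refine Finset.mem_sdiff.2 ⟨mem_Ctot.2 (Or.inl rfl), fun hx => ?_⟩
      obtain ⟨s, _, he⟩ := Finset.mem_image.1 hx
      exact (pc_ne_cH s) he.symm
    have hinlD : ∀ a ∈ A, (Sum.inl a : Cand β) ∈ D := by
      intro a ha
      refine Finset.mem_sdiff.2 ⟨mem_Ctot.2 (Or.inr (Or.inl ⟨a, ha, rfl⟩)), fun hx => ?_⟩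
      obtain ⟨s, _, he⟩ := Finset.mem_image.1 hx
      exact (inl_ne_cH a s) he.symm
    have hcHD : ∀ t ∈ H', (cH t : Cand β) ∈ D := by
      intro t ht
      refine Finset.mem_sdiff.2 ⟨mem_Ctot.2 (Or.inr (Or.inr ⟨t, hH'sub ht, rfl⟩)), fun hx => ?_⟩
      obtain ⟨s, hs, he⟩ := Finset.mem_image.1 hx
      rcases cH_injective he
      exact (Finset.mem_sdiff.1 hs).2 ht
    have himsub : H'.image cH ⊆ D := by
      intro x hx
      obtain ⟨t, ht, rfl⟩ := Finset.mem_image.1 hx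
      exact hcHD t ht
    have hDcases : ∀ m ∈ D, m = pc ∨ (∃ a ∈ A, m = Sum.inl a) ∨ ∃ s ∈ H', m = cH s := by
      intro m hm
      obtain ⟨hmC, hmC'⟩ := Finset.mem_sdiff.1 hm
      rcases mem_Ctot.1 hmC with h | h | ⟨s, hs, rfl⟩
      · exact Or.inl h
      · exact Or.inr (Or.inl h)
      · refine Or.inr (Or.inr ⟨s, ?_, rfl⟩)
        by_contra hsH'
        exact hmC' (Finset.mem_image_of_mem _ (Finset.mem_sdiff.2 ⟨hs, hsH'⟩))
    have hfilter1 : ∀ a : β, (H'.filter fun s => a ∈ s).card ≤ 1 := by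
      intro a
      refine Finset.card_le_one.2 fun s hs t ht => ?_
      obtain ⟨hsH', has⟩ := Finset.mem_filter.1 hs
      obtain ⟨htH', hat⟩ := Finset.mem_filter.1 ht
      by_contra hne
      exact Finset.disjoint_left.1 (hdisj s hsH' t htH' hne) has hat
    have hvaw : ∀ w : Finset (Cand β), w ⊆ H'.image cH → ∀ a : β,
        va H a ∩ w ⊆ (H'.filter fun s => a ∈ s).image cH := by
      intro w hw a x hx
      obtain ⟨hx1, hx2⟩ := Finset.mem_inter.1 hx
      obtain ⟨s, hsH', rfl⟩ := Finset.mem_image.1 (hw hx2)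
      have := (cH_mem_va_iff H a s).1 hx1
      exact Finset.mem_image_of_mem _ (Finset.mem_filter.2 ⟨hsH', this.2⟩)
    have hva1 : ∀ w : Finset (Cand β), w ⊆ H'.image cH → ∀ a : β,
        (va H a ∩ w).card ≤ 1 := by
      intro w hw a
      exact le_trans (Finset.card_le_card (hvaw w hw a))
        (le_trans Finset.card_image_le (hfilter1 a))
    have hpw : ∀ w : Finset (Cand β), w ⊆ H'.image cH → (pc : Cand β) ∉ w := by
      intro w hw h
      obtain ⟨s, _, he⟩ := Finset.mem_image.1 (hw h)
      exact pc_ne_cH s he.symm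
    have hinlw : ∀ w : Finset (Cand β), w ⊆ H'.image cH → ∀ a : β, (Sum.inl a : Cand β) ∉ w := by
      intro w hw a h
      obtain ⟨s, _, he⟩ := Finset.mem_image.1 (hw h)
      exact inl_ne_cH a s he.symm
    have hinjD : Set.InjOn pri (D : Set (Cand β)) :=
      hinj.mono (by exact_mod_cast Finset.coe_subset.2 Finset.sdiff_subset)
    -- margin of inl a is at most ω 1
    have hminl : ∀ w : Finset (Cand β), w ⊆ H'.image cH → ∀ a ∈ A,
        marginContrib ω V' w (Sum.inl a) ≤ ω 1 := by
      intro w hw a ha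
      rw [hV'def, margin_restrict ω (votes A H) (hw.trans himsub) (hinlD a ha),
        margin_inl ω A H ha (hinlw w hw a)]
      exact delta_le hω0 hmono hΔ (le_trans (hva1 w hw a) (by norm_num))
    have hmpc : ∀ w : Finset (Cand β), w ⊆ H'.image cH →
        marginContrib ω V' w pc = ω 1 := by
      intro w hw
      rw [hV'def, margin_restrict ω (votes A H) (hw.trans himsub) hpcD]
      exact margin_pc ω A H hω0 (hpw w hw)
    -- the greedy step
    have hstep : ∀ w : Finset (Cand β), w ⊆ H'.image cH → w.card < κ →
        ∃ m, seqNext ω pri V' D w = {m} ∧ m ∈ H'.image cH ∧ m ∉ w := by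
      intro w hw hwc
      have hwD : w ⊆ D := hw.trans himsub
      have hne : (H'.image cH \ w).Nonempty := by
        rw [Finset.sdiff_nonempty]
        intro hsub
        have := Finset.card_le_card hsub
        rw [Finset.card_image_of_injective _ cH_injective, hH'card] at this
        omega
      obtain ⟨x, hx⟩ := hne
      obtain ⟨hxim, hxw⟩ := Finset.mem_sdiff.1 hx
      obtain ⟨t, htH', rfl⟩ := Finset.mem_image.1 hxim
      have htH : t ∈ H := hH'sub htH'
      have hva_t : ∀ a ∈ t, va H a ∩ w = ∅ := by
        intro a hat
        apply Finset.eq_empty_of_forall_notMem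
        intro y hy
        obtain ⟨s, hs, rfl⟩ := Finset.mem_image.1 (hvaw w hw a hy)
        obtain ⟨hsH', has⟩ := Finset.mem_filter.1 hs
        have hst : s = t := by
          by_contra hne'
          exact Finset.disjoint_left.1 (hdisj s hsH' t htH' hne') has hat
        subst hst
        exact hxw (Finset.mem_inter.1 hy).2
      have hmargin_t : marginContrib ω V' w (cH t) = ω 1 + 3 * ω 1 := by
        rw [hV'def, margin_restrict ω (votes A H) hwD (hcHD t htH')]
        exact margin_cH_eq_four A H hω0 htH (hH3 t htH).1 (hH3 t htH).2 hxw hva_t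
      have htDw : (cH t : Cand β) ∈ D \ w := Finset.mem_sdiff.2 ⟨hcHD t htH', hxw⟩
      obtain ⟨m, hm⟩ := seqNext_nonempty ω pri V' D ⟨cH t, htDw⟩
      have hmmax : m ∈ maxMarginSet ω V' D w := (Finset.mem_filter.1 hm).1
      have hmDw : m ∈ D \ w := (Finset.mem_filter.1 hmmax).1
      have hmge : ω 1 + 3 * ω 1 ≤ marginContrib ω V' w m := by
        have := (Finset.mem_filter.1 hmmax).2 (cH t) htDw
        rwa [hmargin_t] at this
      obtain ⟨hmD, hmw⟩ := Finset.mem_sdiff.1 hmDw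
      rcases hDcases m hmD with rfl | ⟨a, ha, rfl⟩ | ⟨s, hsH', rfl⟩
      · rw [hmpc w hw] at hmge; linarith
      · have := hminl w hw a ha; linarith
      · refine ⟨cH s, ?_, Finset.mem_image_of_mem _ hsH', hmw⟩
        exact Finset.eq_singleton_iff_unique_mem.2
          ⟨hm, fun y hy => seqNext_subsingleton ω pri V' D hinjD w hy hm⟩
    -- the first κ rounds pick exactly the cover
    have key : ∀ j, j ≤ κ → seqCommittee ω pri V' D j ⊆ H'.image cH ∧
        (seqCommittee ω pri V' D j).card = j := by
      intro j
      induction j with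
      | zero => intro _; simp [seqCommittee]
      | succ n ih =>
        intro hn
        obtain ⟨hsub, hcard⟩ := ih (Nat.le_of_succ_le hn)
        obtain ⟨m, hm, hmim, hmw⟩ := hstep _ hsub (by omega)
        have hunf : seqCommittee ω pri V' D (n + 1) =
            seqCommittee ω pri V' D n ∪ seqNext ω pri V' D (seqCommittee ω pri V' D n) := rfl
        rw [hunf, hm, Finset.union_comm, ← Finset.insert_eq]
        exact ⟨Finset.insert_subset hmim hsub,
          by rw [Finset.card_insert_of_notMem hmw, hcard]⟩
    obtain ⟨hsubκ, hcardκ⟩ := key κ le_rfl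
    have hweq : seqCommittee ω pri V' D κ = H'.image cH :=
      Finset.eq_of_subset_of_card_le hsubκ
        (by rw [hcardκ, Finset.card_image_of_injective _ cH_injective, hH'card])
    set wκ := seqCommittee ω pri V' D κ with hwκdef
    have hwsub : wκ ⊆ H'.image cH := hweq.le
    have hub : ∀ c' ∈ D \ wκ, marginContrib ω V' wκ c' ≤ ω 1 := by
      intro c' hc'
      obtain ⟨hc'D, hc'w⟩ := Finset.mem_sdiff.1 hc'
      rcases hDcases c' hc'D with rfl | ⟨a, ha, rfl⟩ | ⟨s, hsH', rfl⟩
      · exact (hmpc wκ hwsub).le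
      · exact hminl wκ hwsub a ha
      · exact absurd (hweq ▸ Finset.mem_image_of_mem _ hsH') hc'w
    have hpcmax : pc ∈ maxMarginSet ω V' D wκ := by
      refine Finset.mem_filter.2 ⟨Finset.mem_sdiff.2 ⟨hpcD, hpw wκ hwsub⟩, fun c' hc' => ?_⟩
      rw [hmpc wκ hwsub]
      exact hub c' hc'
    have hprif : ∀ c' ∈ maxMarginSet ω V' D wκ, pri pc ≤ pri c' := by
      intro c' hc'
      obtain ⟨hc'Dw, hc'max⟩ := Finset.mem_filter.1 hc'
      obtain ⟨hc'D, hc'w⟩ := Finset.mem_sdiff.1 hc'Dw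
      rcases hDcases c' hc'D with rfl | ⟨a, ha, rfl⟩ | ⟨s, hsH', rfl⟩
      · exact le_rfl
      · exfalso
        have hge : ω 1 ≤ marginContrib ω V' wκ (Sum.inl a) := by
          have := hc'max pc (Finset.mem_sdiff.2 ⟨hpcD, hpw wκ hwsub⟩)
          rwa [hmpc wκ hwsub] at this
        have hcov : ∃ s ∈ H', a ∈ s := by
          have : a ∈ H'.biUnion (fun s => s) := hunion.symm ▸ ha
          simpa using Finset.mem_biUnion.1 this
        obtain ⟨s, hsH', has⟩ := hcov
        have hcard1 : (va H a ∩ wκ).card = 1 := by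
          refine le_antisymm (hva1 wκ hwsub a) ?_
          refine Finset.card_pos.2 ⟨cH s, Finset.mem_inter.2 ⟨?_, ?_⟩⟩
          · exact (cH_mem_va_iff H a s).2 ⟨hH'sub hsH', has⟩
          · exact hweq ▸ Finset.mem_image_of_mem _ hsH'
        have hm : marginContrib ω V' wκ (Sum.inl a) = ω 2 - ω 1 := by
          rw [hV'def, margin_restrict ω (votes A H) (hwsub.trans himsub) (hinlD a ha),
            margin_inl ω A H ha (hinlw wκ hwsub a), hcard1]
        have := hΔ 1 le_rfl (by norm_num)
        rw [hm] at hge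
        norm_num at this hge
        linarith
      · exact absurd (hweq ▸ Finset.mem_image_of_mem _ hsH') hc'w
    have hpcnext : pc ∈ seqNext ω pri V' D wκ := Finset.mem_filter.2 ⟨hpcmax, hprif⟩
    refine ⟨C', hC'sub, le_of_eq hC'card, ?_⟩
    exact Finset.mem_union_right _ hpcnext
  · -- reverse direction
    rintro ⟨C', hC'sub, hC'card, hpcmem⟩
    classical
    set D : Finset (Cand β) := Ctot A H \ C' with hDdef
    set V' : Multiset (Finset (Cand β)) := (votes A H).map (· ∩ D) with hV'def
    have hC'sub' : C' ⊆ Ctot A H := hC'sub.trans Finset.sdiff_subset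
    have hpcC' : (pc : Cand β) ∉ C' := fun h => by
      have := (Finset.mem_sdiff.1 (hC'sub h)).2
      simp at this
    have hinjD : Set.InjOn pri (D : Set (Cand β)) :=
      hinj.mono (by exact_mod_cast Finset.coe_subset.2 Finset.sdiff_subset)
    obtain ⟨j, hj, hpcnext⟩ := mem_seqCommittee_exists ω pri V' D hpcmem
    set w := seqCommittee ω pri V' D j with hwdef
    have hwD : w ⊆ D := seqCommittee_subset ω pri V' D j
    have hwcard : w.card ≤ j := seqCommittee_card_le ω pri V' D hinjD j
    have hjκ : j ≤ κ := by omega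
    have hpcDw : (pc : Cand β) ∈ D \ w := seqNext_subset ω pri V' D w hpcnext
    obtain ⟨hpcD, hpcw⟩ := Finset.mem_sdiff.1 hpcDw
    have hpcmax : pc ∈ maxMarginSet ω V' D w := (Finset.mem_filter.1 hpcnext).1
    have hmax : ∀ c' ∈ D \ w, marginContrib ω V' w c' ≤ marginContrib ω V' w pc :=
      (Finset.mem_filter.1 hpcmax).2
    have hpri' : ∀ c' ∈ maxMarginSet ω V' D w, pri pc ≤ pri c' :=
      (Finset.mem_filter.1 hpcnext).2
    have hmpc : marginContrib ω V' w pc = ω 1 := by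
      rw [hV'def, margin_restrict ω (votes A H) hwD hpcD]
      exact margin_pc ω A H hω0 hpcw
    -- every non-deleted candidate outside w other than pc has margin < ω 1
    have h1 : ∀ c' ∈ D \ w, c' ≠ pc → marginContrib ω V' w c' < ω 1 := by
      intro c' hc' hne
      have hle : marginContrib ω V' w c' ≤ ω 1 := (hmax c' hc').trans_eq hmpc
      rcases lt_or_eq_of_le hle with h | h
      · exact h
      · exfalso
        have hc'max : c' ∈ maxMarginSet ω V' D w := by
          refine Finset.mem_filter.2 ⟨hc', fun x hx => ?_⟩
          rw [h]
          exact (hmax x hx).trans_eq hmpc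
        have hple := hpri' c' hc'max
        have hc'C : c' ∈ Ctot A H :=
          Finset.sdiff_subset ((Finset.mem_sdiff.1 hc').1)
        rcases mem_Ctot.1 hc'C with h' | ⟨a, ha, rfl⟩ | ⟨s, hs, rfl⟩
        · exact hne h'
        · exact absurd (hpri2 a ha) (not_lt.2 hple)
        · exact absurd (hpri3 s hs) (not_lt.2 hple)
    -- all surviving set candidates are in w
    have h2 : ∀ t ∈ H, (cH t : Cand β) ∉ C' → (cH t : Cand β) ∈ w := by
      intro t ht htC'
      by_contra htw
      have htD : (cH t : Cand β) ∈ D :=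
        Finset.mem_sdiff.2 ⟨mem_Ctot.2 (Or.inr (Or.inr ⟨t, ht, rfl⟩)), htC'⟩
      have hlt := h1 (cH t) (Finset.mem_sdiff.2 ⟨htD, htw⟩) (pc_ne_cH t).symm
      have hge : ω 1 ≤ marginContrib ω V' w (cH t) := by
        rw [hV'def, margin_restrict ω (votes A H) hwD htD]
        exact margin_cH_ge A H hω0 hmono ht htw
      linarith
    set HcH : Finset (Cand β) := H.image cH with hHcHdef
    have hHcHcard : HcH.card = 3 * κ := by
      rw [hHcHdef, Finset.card_image_of_injective _ cH_injective, hHcard]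
    have hsub2 : HcH \ C' ⊆ w := by
      intro x hx
      obtain ⟨hx1, hx2⟩ := Finset.mem_sdiff.1 hx
      obtain ⟨t, ht, rfl⟩ := Finset.mem_image.1 hx1
      exact h2 t ht hx2
    have hcard1 : κ ≤ (HcH \ C').card := by
      have h := Finset.le_card_sdiff C' HcH
      omega
    have hweq : w = HcH \ C' := by
      exact (Finset.eq_of_subset_of_card_le hsub2 (by omega)).symm
    have hwcardκ : w.card = κ := by
      have := Finset.card_le_card hsub2
      omega
    -- C' consists only of set candidates
    have hC'HcH : C' ⊆ HcH := by
      have hia : (HcH ∩ C').card + (HcH \ C').card = HcH.card :=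
        Finset.card_inter_add_card_sdiff HcH C'
      have h3 : (HcH \ C').card = κ := by
        have := Finset.card_le_card hsub2
        omega
      have hiacard : (HcH ∩ C').card = C'.card := by
        have hle := Finset.card_le_card (Finset.inter_subset_right : HcH ∩ C' ⊆ C')
        omega
      have : HcH ∩ C' = C' :=
        Finset.eq_of_subset_of_card_le Finset.inter_subset_right (le_of_eq hiacard.symm)
      exact this ▸ Finset.inter_subset_left
    -- the selected sets
    set H' : Finset (Finset β) := H.filter (fun s => (cH s : Cand β) ∈ w) with hH'def
    have hH'sub : H' ⊆ H := Finset.filter_subset _ _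
    have him : H'.image cH = w := by
      apply Finset.Subset.antisymm
      · intro x hx
        obtain ⟨t, ht, rfl⟩ := Finset.mem_image.1 hx
        exact (Finset.mem_filter.1 ht).2
      · intro x hx
        have hx' : x ∈ HcH \ C' := hweq ▸ hx
        obtain ⟨t, ht, rfl⟩ := Finset.mem_image.1 (Finset.mem_sdiff.1 hx').1
        exact Finset.mem_image_of_mem _ (Finset.mem_filter.2 ⟨ht, hx⟩)
    have hH'card : H'.card = κ := by
      rw [← Finset.card_image_of_injective H' cH_injective, him, hwcardκ]
    -- every ground element is covered
    have hcov : ∀ a ∈ A, ∃ s ∈ H', a ∈ s := by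
      intro a ha
      have haD : (Sum.inl a : Cand β) ∈ D := by
        refine Finset.mem_sdiff.2 ⟨mem_Ctot.2 (Or.inr (Or.inl ⟨a, ha, rfl⟩)), fun hx => ?_⟩
        obtain ⟨t, _, he⟩ := Finset.mem_image.1 (hC'HcH hx)
        exact inl_ne_cH a t he.symm
      have haw : (Sum.inl a : Cand β) ∉ w := by
        intro hx
        have hx' : Sum.inl a ∈ HcH \ C' := hweq ▸ hx
        obtain ⟨t, _, he⟩ := Finset.mem_image.1 (Finset.mem_sdiff.1 hx').1
        exact inl_ne_cH a t he.symm
      have hlt := h1 (Sum.inl a) (Finset.mem_sdiff.2 ⟨haD, haw⟩) (fun h => pc_ne_inl a h.symm)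
      rw [hV'def, margin_restrict ω (votes A H) hwD haD, margin_inl ω A H ha haw] at hlt
      have hpos : (va H a ∩ w).Nonempty := by
        rw [Finset.nonempty_iff_ne_empty]
        intro hemp
        rw [hemp] at hlt
        simp [hω0] at hlt
      obtain ⟨x, hx⟩ := hpos
      obtain ⟨hx1, hx2⟩ := Finset.mem_inter.1 hx
      have hx' : x ∈ HcH \ C' := hweq ▸ hx2
      obtain ⟨t, ht, rfl⟩ := Finset.mem_image.1 (Finset.mem_sdiff.1 hx').1
      have := (cH_mem_va_iff H a t).1 hx1
      exact ⟨t, Finset.mem_filter.2 ⟨ht, hx2⟩, this.2⟩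
    -- counting: each element is covered exactly once
    have hcount : ∀ a ∈ A, (H'.filter fun s => a ∈ s).card = 1 := by
      have hsum : ∑ a ∈ A, (H'.filter fun s => a ∈ s).card = 3 * κ := by
        have e1 : ∀ a ∈ A, (H'.filter fun s => a ∈ s).card
            = ∑ s ∈ H', if a ∈ s then 1 else 0 := fun a _ => Finset.card_filter _ _
        rw [Finset.sum_congr rfl e1, Finset.sum_comm]
        have e2 : ∀ s ∈ H', (∑ a ∈ A, if a ∈ s then 1 else 0) = 3 := by
          intro s hs
          rw [← Finset.card_filter, Finset.filter_mem_eq_inter,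
            Finset.inter_eq_right.2 (hH3 s (hH'sub hs)).1]
          exact (hH3 s (hH'sub hs)).2
        rw [Finset.sum_congr rfl e2, Finset.sum_const, hH'card, smul_eq_mul]
        omega
      have hone : ∀ a ∈ A, 1 ≤ (H'.filter fun s => a ∈ s).card := by
        intro a ha
        obtain ⟨s, hs, has⟩ := hcov a ha
        exact Finset.card_pos.2 ⟨s, Finset.mem_filter.2 ⟨hs, has⟩⟩
      have htot : ∑ a ∈ A, (1:ℕ) = ∑ a ∈ A, (H'.filter fun s => a ∈ s).card := by
        rw [hsum, Finset.sum_const, hA, smul_eq_mul]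
        omega
      intro a ha
      exact ((Finset.sum_eq_sum_iff_of_le hone).1 htot a ha).symm
    refine ⟨H', hH'sub, hH'card, ?_, ?_⟩
    · intro s hs t ht hst
      by_contra hnd
      obtain ⟨a, has, hat⟩ := Finset.not_disjoint_iff.1 hnd
      have haA : a ∈ A := (hH3 s (hH'sub hs)).1 has
      have hss : ({s, t} : Finset (Finset β)) ⊆ H'.filter fun u => a ∈ u := by
        intro u hu
        rcases Finset.mem_insert.1 hu with rfl | hu
        · exact Finset.mem_filter.2 ⟨hs, has⟩
        · rw [Finset.mem_singleton.1 hu]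
          exact Finset.mem_filter.2 ⟨ht, hat⟩
      have h2le : 2 ≤ (H'.filter fun u => a ∈ u).card := by
        have := Finset.card_le_card hss
        rwa [Finset.card_insert_of_notMem (by simpa using hst), Finset.card_singleton] at this
      rw [hcount a haA] at h2le
      omega
    · apply Finset.Subset.antisymm
      · intro a ha
        obtain ⟨s, hs, has⟩ := Finset.mem_biUnion.1 ha
        exact (hH3 s (hH'sub hs)).1 has
      · intro a ha
        obtain ⟨s, hs, has⟩ := hcov a ha
        exact Finset.mem_biUnion.2 ⟨s, hs, has⟩
end Stmt7
end

section
/- Let G = (N, A) be a d-regular graph with d ≥ 1 and let κ be an integer with 1 ≤ κ ≤ |N|. Construct the election with candidates C = N ∪ {p}, where p is a fresh candidate, and votes V: d−1 copies of the vote {p} and, for each edge {u, u'} ∈ A, one vote {u, u'}. Then G has an independent set of size κ if and only if p is not contained in any ABCCV winning κ-committee of (C, V). -/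
open Finset

attribute [local instance] Classical.propDecidable

universe u

variable {α : Type u}

namespace Stmt8

variable {β : Type u} [DecidableEq β]

/-- Candidate type: a vertex of the graph, or the distinguished candidate `p`. -/
abbrev Cand (β : Type u) := β ⊕ Unit

/-- The distinguished candidate `p`. -/
def pc : Cand β := Sum.inr ()

/-- The candidate set `C = N ∪ {p}`. -/
def Ctot (N : Finset β) : Finset (Cand β) := insert pc (N.image Sum.inl)

/-- The votes: `d − 1` copies of `{p}` and one vote `{u, u'}` per edge `{u, u'}`. -/
def votes (d : ℕ) (Aed : Finset (Finset β)) : Multiset (Finset (Cand β)) :=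
  Multiset.replicate (d - 1) ({pc} : Finset (Cand β))
    + Aed.val.map (fun e => e.image Sum.inl)


/-- Number of edges incident to a vertex set `S`. -/
noncomputable def inc (Aed : Finset (Finset β)) (S : Finset β) : ℕ :=
  (Aed.filter fun e => ∃ u ∈ e, u ∈ S).card

/-- Number of edges inside a vertex set `S`. -/
noncomputable def within (Aed : Finset (Finset β)) (S : Finset β) : ℕ :=
  (Aed.filter fun e => e ⊆ S).card

lemma score_eq (d : ℕ) (Aed : Finset (Finset β)) (w : Finset (Cand β)) :
    abccvScore (votes d Aed) w
      = (if pc ∈ w then d - 1 else 0)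
        + (Aed.filter fun e => ∃ u ∈ e, Sum.inl u ∈ w).card := by
  unfold abccvScore votes
  rw [Multiset.filter_add, Multiset.card_add]
  congr 1
  · by_cases h : pc ∈ w
    · rw [if_pos h, Multiset.filter_eq_self.mpr, Multiset.card_replicate]
      intro v hv
      rw [Multiset.eq_of_mem_replicate hv]
      exact ⟨pc, Finset.mem_inter.mpr ⟨Finset.mem_singleton_self _, h⟩⟩
    · rw [if_neg h]
      rw [Multiset.filter_eq_nil.mpr, Multiset.card_zero]
      intro v hv
      rw [Multiset.eq_of_mem_replicate hv]
      rintro ⟨x, hx⟩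
      rw [Finset.mem_inter, Finset.mem_singleton] at hx
      exact h (hx.1 ▸ hx.2)
  · rw [Multiset.filter_map, Multiset.card_map]
    show Multiset.card (Multiset.filter _ Aed.val) = Multiset.card (Multiset.filter _ Aed.val)
    congr 1
    apply Multiset.filter_congr
    intro e _
    simp only [Function.comp_apply]
    constructor
    · rintro ⟨x, hx⟩
      rw [Finset.mem_inter, Finset.mem_image] at hx
      obtain ⟨⟨u, hu, rfl⟩, hxw⟩ := hx
      exact ⟨u, hu, hxw⟩
    · rintro ⟨u, hu, huw⟩
      exact ⟨Sum.inl u, Finset.mem_inter.mpr ⟨Finset.mem_image_of_mem _ hu, huw⟩⟩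

lemma double_count (d : ℕ) (N : Finset β) (Aed : Finset (Finset β))
    (hedge : ∀ e ∈ Aed, e.card = 2 ∧ e ⊆ N)
    (hreg : ∀ u ∈ N, (Aed.filter fun e => u ∈ e).card = d)
    (S : Finset β) (hS : S ⊆ N) :
    inc Aed S + within Aed S = d * S.card := by
  have h1 : ∀ e ∈ Aed, (e ∩ S).card
      = (if ∃ u ∈ e, u ∈ S then 1 else 0) + (if e ⊆ S then 1 else 0) := by
    intro e he
    obtain ⟨hc, _⟩ := hedge e he
    by_cases hex : ∃ u ∈ e, u ∈ S
    · by_cases hsub : e ⊆ S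
      · have hinter : e ∩ S = e := Finset.inter_eq_left.mpr hsub
        rw [if_pos hex, if_pos hsub, hinter, hc]
      · rw [if_pos hex, if_neg hsub]
        obtain ⟨u, hu, huS⟩ := hex
        have h1' : 1 ≤ (e ∩ S).card :=
          Finset.card_pos.mpr ⟨u, Finset.mem_inter.mpr ⟨hu, huS⟩⟩
        have hle : (e ∩ S).card ≤ 2 := hc ▸ Finset.card_le_card Finset.inter_subset_left
        have hne : (e ∩ S).card ≠ 2 := by
          intro h2
          exact hsub (Finset.inter_eq_left.mp
            (Finset.eq_of_subset_of_card_le Finset.inter_subset_left (by omega)))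
        omega
    · rw [if_neg hex, if_neg (fun hsub => hex ?_)]
      · have : e ∩ S = ∅ := by
          rw [Finset.eq_empty_iff_forall_notMem]
          intro x hx
          rw [Finset.mem_inter] at hx
          exact hex ⟨x, hx.1, hx.2⟩
        simp [this]
      · have : e.Nonempty := Finset.card_pos.mp (by omega)
        obtain ⟨u, hu⟩ := this
        exact ⟨u, hu, hsub hu⟩
  unfold inc within
  calc (Aed.filter fun e => ∃ u ∈ e, u ∈ S).card + (Aed.filter fun e => e ⊆ S).card
      = ∑ e ∈ Aed, ((if ∃ u ∈ e, u ∈ S then 1 else 0) + (if e ⊆ S then 1 else 0)) := by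
        rw [Finset.sum_add_distrib, Finset.card_filter, Finset.card_filter]
    _ = ∑ e ∈ Aed, (e ∩ S).card := Finset.sum_congr rfl fun e he => (h1 e he).symm
    _ = ∑ e ∈ Aed, (S.filter fun u => u ∈ e).card := by
        refine Finset.sum_congr rfl fun e _ => ?_
        congr 1
        ext x
        simp only [Finset.mem_inter, Finset.mem_filter]
        exact and_comm
    _ = ∑ e ∈ Aed, ∑ u ∈ S, (if u ∈ e then 1 else 0) :=
        Finset.sum_congr rfl fun e _ => Finset.card_filter _ _
    _ = ∑ u ∈ S, ∑ e ∈ Aed, (if u ∈ e then 1 else 0) := Finset.sum_comm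
    _ = ∑ u ∈ S, d := Finset.sum_congr rfl fun u hu => by
        rw [← Finset.card_filter, hreg u (hS hu)]
    _ = d * S.card := by rw [Finset.sum_const, smul_eq_mul, mul_comm]

lemma vertexPart_image (N : Finset β) (w : Finset (Cand β)) (hw : w ⊆ Ctot N) :
    ((N.filter fun u => Sum.inl u ∈ w).image Sum.inl) = w.erase pc := by
  ext x
  simp only [Finset.mem_image, Finset.mem_filter, Finset.mem_erase]
  constructor
  · rintro ⟨u, ⟨_, huw⟩, rfl⟩
    refine ⟨?_, huw⟩
    intro h
    exact Sum.inl_ne_inr h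
  · rintro ⟨hx, hxw⟩
    have hmem := hw hxw
    unfold Ctot at hmem
    rw [Finset.mem_insert] at hmem
    rcases hmem with h | h
    · exact absurd h hx
    · rw [Finset.mem_image] at h
      obtain ⟨u, hu, rfl⟩ := h
      exact ⟨u, ⟨hu, hxw⟩, rfl⟩

lemma vertexPart_card (N : Finset β) (w : Finset (Cand β)) (hw : w ⊆ Ctot N) :
    (N.filter fun u => Sum.inl u ∈ w).card = w.card - (if pc ∈ w then 1 else 0) := by
  have h := vertexPart_image N w hw
  have hc : (N.filter fun u => Sum.inl u ∈ w).card = (w.erase pc).card := by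
    rw [← h, Finset.card_image_of_injective _ Sum.inl_injective]
  rw [hc]
  by_cases hp : pc ∈ w
  · rw [if_pos hp, Finset.card_erase_of_mem hp]
  · rw [if_neg hp, Finset.erase_eq_of_notMem hp, Nat.sub_zero]

lemma score_formula (d : ℕ) (N : Finset β) (Aed : Finset (Finset β))
    (hedge : ∀ e ∈ Aed, e.card = 2 ∧ e ⊆ N)
    (w : Finset (Cand β)) (_hw : w ⊆ Ctot N) :
    abccvScore (votes d Aed) w
      = (if pc ∈ w then d - 1 else 0) + inc Aed (N.filter fun u => Sum.inl u ∈ w) := by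
  rw [score_eq]
  congr 1
  unfold inc
  congr 1
  apply Finset.filter_congr
  intro e he
  simp only [Finset.mem_filter]
  constructor
  · rintro ⟨u, hu, huw⟩
    exact ⟨u, hu, (hedge e he).2 hu, huw⟩
  · rintro ⟨u, hu, _, huw⟩
    exact ⟨u, hu, huw⟩

lemma vp_eq (N : Finset β) (S : Finset β) (hS : S ⊆ N) (w : Finset (Cand β))
    (h : ∀ u : β, Sum.inl u ∈ w ↔ u ∈ S) :
    (N.filter fun u => Sum.inl u ∈ w) = S := by
  ext u
  rw [Finset.mem_filter, h u]
  exact ⟨fun hx => hx.2, fun hx => ⟨hS hx, hx⟩⟩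

lemma mem_image_inl (S : Finset β) (u : β) :
    (Sum.inl u : Cand β) ∈ S.image Sum.inl ↔ u ∈ S := by
  rw [Finset.mem_image]
  exact ⟨fun ⟨v, hv, h⟩ => (Sum.inl_injective h) ▸ hv, fun h => ⟨u, h, rfl⟩⟩

lemma mem_insert_pc_image_inl (S : Finset β) (u : β) :
    (Sum.inl u : Cand β) ∈ insert pc (S.image Sum.inl) ↔ u ∈ S := by
  rw [Finset.mem_insert, mem_image_inl]
  exact ⟨fun h => h.elim (fun h => (Sum.inl_ne_inr h).elim) id, Or.inr⟩

lemma key_within (N : Finset β) (Aed : Finset (Finset β))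
    (hedge : ∀ e ∈ Aed, e.card = 2 ∧ e ⊆ N)
    (S : Finset β) (hS : S ⊆ N) (κ : ℕ) (_hκ1 : 1 ≤ κ) (hScard : S.card = κ)
    (hcov : ∃ e ∈ Aed, e ⊆ S) :
    ∃ T ⊆ N, T.card = κ - 1 ∧ within Aed T + 1 ≤ within Aed S := by
  obtain ⟨e, he, heS⟩ := hcov
  have hc := (hedge e he).1
  have hne : e.Nonempty := Finset.card_pos.mp (by omega)
  obtain ⟨u, hu⟩ := hne
  refine ⟨S.erase u, (Finset.erase_subset _ _).trans hS, ?_, ?_⟩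
  · rw [Finset.card_erase_of_mem (heS hu), hScard]
  · unfold within
    have hnot : e ∉ Aed.filter fun e' => e' ⊆ S.erase u := by
      rw [Finset.mem_filter]
      rintro ⟨-, h⟩
      exact (Finset.notMem_erase u S) (h hu)
    have hsub : insert e (Aed.filter fun e' => e' ⊆ S.erase u)
        ⊆ Aed.filter fun e' => e' ⊆ S := by
      intro x hx
      rw [Finset.mem_insert] at hx
      rcases hx with rfl | hx
      · exact Finset.mem_filter.mpr ⟨he, heS⟩
      · rw [Finset.mem_filter] at hx ⊢
        exact ⟨hx.1, hx.2.trans (Finset.erase_subset _ _)⟩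
    calc (Aed.filter fun e' => e' ⊆ S.erase u).card + 1
        = (insert e (Aed.filter fun e' => e' ⊆ S.erase u)).card := by
          rw [Finset.card_insert_of_notMem hnot]
      _ ≤ (Aed.filter fun e' => e' ⊆ S).card := Finset.card_le_card hsub

/-- correctness of the reduction from Independent Set on `d`-regular graphs
to Nonwinning Testing for ABCCV. -/
theorem nonwinning_abccv (d : ℕ) (hd : 1 ≤ d)
    (N : Finset β) (Aed : Finset (Finset β))
    (hedge : ∀ e ∈ Aed, e.card = 2 ∧ e ⊆ N)
    (hreg : ∀ u ∈ N, (Aed.filter fun e => u ∈ e).card = d)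
    (κ : ℕ) (hκ1 : 1 ≤ κ) (hκ2 : κ ≤ N.card) :
    (∃ S ⊆ N, S.card = κ ∧ ∀ e ∈ Aed, ¬ e ⊆ S) ↔
      (∀ w ∈ abccvWinners (Ctot N) (votes d Aed) κ, pc ∉ w) := by
  have pcnot : ∀ u : β, Sum.inl u ≠ (pc : Cand β) := fun u h => Sum.inl_ne_inr h
  constructor
  · rintro ⟨S, hSN, hScard, hSind⟩ w hw hpw
    rw [abccvWinners, Finset.mem_filter, Finset.mem_powersetCard] at hw
    obtain ⟨⟨hwC, hwcard⟩, hmax⟩ := hw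
    set T := N.filter fun u => Sum.inl u ∈ w with hT
    have hTN : T ⊆ N := Finset.filter_subset _ _
    have hTcard : T.card = κ - 1 := by
      rw [hT, vertexPart_card N w hwC, if_pos hpw, hwcard]
    have hsw := score_formula d N Aed hedge w hwC
    rw [if_pos hpw] at hsw
    have hdcT := double_count d N Aed hedge hreg T hTN
    -- committee S
    have hSmem : S.image Sum.inl ∈ (Ctot N).powersetCard κ := by
      rw [Finset.mem_powersetCard]
      constructor
      · intro x hx
        rw [Finset.mem_image] at hx
        obtain ⟨u, hu, rfl⟩ := hx
        exact Finset.mem_insert_of_mem (Finset.mem_image_of_mem _ (hSN hu))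
      · rw [Finset.card_image_of_injective _ Sum.inl_injective, hScard]
    have hsS : abccvScore (votes d Aed) (S.image Sum.inl) = inc Aed S := by
      have hsub : S.image Sum.inl ⊆ Ctot N := (Finset.mem_powersetCard.mp hSmem).1
      rw [score_formula d N Aed hedge _ hsub, vp_eq N S hSN _ (mem_image_inl S),
        if_neg (by rw [Finset.mem_image]; rintro ⟨u, _, h⟩; exact pcnot u h)]
      omega
    have hdcS := double_count d N Aed hedge hreg S hSN
    have hwithS : within Aed S = 0 := by
      unfold within
      rw [Finset.card_eq_zero, Finset.filter_eq_empty_iff]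
      exact hSind
    have hle := hmax _ hSmem
    rw [hsS, hsw, ← hT] at hle
    rw [hTcard] at hdcT
    rw [hScard] at hdcS
    have hκd : d * κ = d * (κ - 1) + d := by
      have h1 : κ - 1 + 1 = κ := Nat.sub_add_cancel hκ1
      calc d * κ = d * ((κ - 1) + 1) := by rw [h1]
        _ = d * (κ - 1) + d := by ring
    omega
  · intro hnw
    by_contra hno
    push_neg at hno
    -- hno : ∀ S ⊆ N, S.card = κ → ∃ e ∈ Aed, e ⊆ S
    obtain ⟨T₀, hT₀sub, hT₀min⟩ :=
      Finset.exists_min_image (N.powersetCard (κ - 1)) (within Aed)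
        ((Finset.powersetCard_nonempty).mpr (by omega))
    rw [Finset.mem_powersetCard] at hT₀sub
    obtain ⟨hT₀N, hT₀card⟩ := hT₀sub
    have hkey : ∀ S ⊆ N, S.card = κ → within Aed T₀ + 1 ≤ within Aed S := by
      intro S hSN hScard
      obtain ⟨T, hTN, hTcard, hlt⟩ :=
        key_within N Aed hedge S hSN κ hκ1 hScard (hno S hSN hScard)
      have := hT₀min T (Finset.mem_powersetCard.mpr ⟨hTN, hTcard⟩)
      omega
    set w : Finset (Cand β) := insert pc (T₀.image Sum.inl) with hwdef
    have hpw : pc ∈ w := Finset.mem_insert_self _ _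
    have hwsub : w ⊆ Ctot N := by
      intro x hx
      rw [hwdef, Finset.mem_insert] at hx
      rcases hx with rfl | hx
      · exact Finset.mem_insert_self _ _
      · rw [Finset.mem_image] at hx
        obtain ⟨u, hu, rfl⟩ := hx
        exact Finset.mem_insert_of_mem (Finset.mem_image_of_mem _ (hT₀N hu))
    have hwcard : w.card = κ := by
      rw [hwdef, Finset.card_insert_of_notMem
        (by rw [Finset.mem_image]; rintro ⟨u, _, h⟩; exact pcnot u h),
        Finset.card_image_of_injective _ Sum.inl_injective, hT₀card]
      omega
    have hsw : abccvScore (votes d Aed) w = (d - 1) + inc Aed T₀ := by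
      rw [score_formula d N Aed hedge w hwsub, if_pos hpw, hwdef, vp_eq N T₀ hT₀N _ (mem_insert_pc_image_inl T₀)]
      
    have hdc0 := double_count d N Aed hedge hreg T₀ hT₀N
    rw [hT₀card] at hdc0
    have hκd : d * κ = d * (κ - 1) + d := by
      have : κ - 1 + 1 = κ := Nat.sub_add_cancel hκ1
      calc d * κ = d * ((κ - 1) + 1) := by rw [this]
        _ = d * (κ - 1) + d := by ring
    have hwin : w ∈ abccvWinners (Ctot N) (votes d Aed) κ := by
      rw [abccvWinners, Finset.mem_filter, Finset.mem_powersetCard]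
      refine ⟨⟨hwsub, hwcard⟩, ?_⟩
      intro w' hw'
      rw [Finset.mem_powersetCard] at hw'
      obtain ⟨hw'C, hw'card⟩ := hw'
      set T' := N.filter fun u => Sum.inl u ∈ w' with hT'
      have hT'N : T' ⊆ N := Finset.filter_subset _ _
      have hsw' := score_formula d N Aed hedge w' hw'C
      have hdc' := double_count d N Aed hedge hreg T' hT'N
      rw [hsw, hsw']
      by_cases hp' : pc ∈ w'
      · have hT'card : T'.card = κ - 1 := by
          rw [hT', vertexPart_card N w' hw'C, if_pos hp', hw'card]
        have hmin := hT₀min T' (Finset.mem_powersetCard.mpr ⟨hT'N, hT'card⟩)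
        rw [if_pos hp', ← hT']
        rw [hT'card] at hdc'
        omega
      · have hT'card : T'.card = κ := by
          rw [hT', vertexPart_card N w' hw'C, if_neg hp', hw'card]
          omega
        have hk := hkey T' hT'N hT'card
        rw [if_neg hp', ← hT']
        rw [hT'card] at hdc'
        omega
    exact hnw w hwin hpw

end Stmt8
end

section
/- Let G = (R ∪ B, E) be a bipartite graph with no isolated vertices in which every r ∈ R has degree exactly d ≥ 1, and let κ be an integer with 1 ≤ κ ≤ |B|. Construct the election with candidates: one candidate per b ∈ B (identified with b); for each r ∈ R, a set C(r) of |B| + 2 fresh candidates, these sets pairwise disjoint; a fresh candidate p; and a set X of 2κ + d fresh candidates; and votes V: one vote B ∪ X and, for each r ∈ R, one vote v(r) = N_G(r) ∪ C(r). Then there exists B' ⊆ B with |B'| = κ dominating R if and only if p is not contained in any MAV winning κ-committee of (C, V). -/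
open Finset

attribute [local instance] Classical.propDecidable

universe u

variable {α : Type u}

namespace Stmt10

variable {β : Type u} [DecidableEq β]

/-- Candidate type: a blue vertex `b ∈ B`, a fresh candidate of a set `C(r)`,
a fresh candidate of the set `X`, or the distinguished candidate `p`. -/
abbrev Cand (β : Type u) := β ⊕ (β × ℕ) ⊕ ℕ ⊕ Unit

/-- The distinguished candidate `p`. -/
def pc : Cand β := Sum.inr (Sum.inr (Sum.inr ()))

/-- The set `C(r)` of `|B| + 2` fresh candidates created for the red vertex `r`. -/
def CrSet (B : Finset β) (r : β) : Finset (Cand β) :=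
  (Finset.range (B.card + 2)).image fun i => (Sum.inr (Sum.inl (r, i)) : Cand β)

/-- The set `X` of `2κ + d` fresh candidates. -/
def Xset (κ d : ℕ) : Finset (Cand β) :=
  (Finset.range (2 * κ + d)).image fun j => (Sum.inr (Sum.inr (Sum.inl j)) : Cand β)

/-- The neighbors of the red vertex `r`. -/
def nbrR (Ed : Finset (β × β)) (r : β) : Finset β := (Ed.filter fun e => e.1 = r).image Prod.snd

/-- The neighbors of the blue vertex `b`. -/
def nbrB (Ed : Finset (β × β)) (b : β) : Finset β := (Ed.filter fun e => e.2 = b).image Prod.fst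

/-- The whole candidate set. -/
def Ctot (R B : Finset β) (κ d : ℕ) : Finset (Cand β) :=
  insert pc (B.image Sum.inl ∪ R.biUnion (CrSet B) ∪ Xset κ d)

/-- The votes: one vote `B ∪ X` and, for each `r ∈ R`, one vote
`v(r) = N_G(r) ∪ C(r)`. -/
def votes (Ed : Finset (β × β)) (R B : Finset β) (κ d : ℕ) : Multiset (Finset (Cand β)) :=
  (B.image Sum.inl ∪ Xset κ d) ::ₘ
    R.val.map (fun r => (nbrR Ed r).image Sum.inl ∪ CrSet B r)

private lemma dist_identity {γ : Type u} [DecidableEq γ] (s t : Finset γ) :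
    (s \ t).card + (t \ s).card + 2 * (s ∩ t).card = s.card + t.card := by
  have h1 := Finset.card_sdiff_add_card_inter s t
  have h2 := Finset.card_sdiff_add_card_inter t s
  rw [Finset.inter_comm] at h2
  omega

private lemma aux_Xcard (κ d : ℕ) : (Xset κ d : Finset (Cand β)).card = 2 * κ + d := by
  rw [Xset, Finset.card_image_of_injective _ (fun a b h => by simpa using h),
    Finset.card_range]

private lemma aux_Crcard (B : Finset β) (r : β) : (CrSet B r).card = B.card + 2 := by
  rw [CrSet, Finset.card_image_of_injective _ (fun a b h => by simpa using h),
    Finset.card_range]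

private lemma aux_pc_notmem (B : Finset β) (κ d : ℕ) :
    (pc : Cand β) ∉ B.image (Sum.inl : β → Cand β) ∪ Xset κ d := by
  simp [pc, Xset]

private lemma aux_disjBX (B : Finset β) (κ d : ℕ) :
    Disjoint (B.image (Sum.inl : β → Cand β)) (Xset κ d) := by
  simp only [Finset.disjoint_left, Finset.mem_image, Xset]
  rintro a ⟨b, _, rfl⟩ h
  simp at h

private lemma aux_v0card (B : Finset β) (κ d : ℕ) :
    (B.image (Sum.inl : β → Cand β) ∪ Xset κ d).card = B.card + (2 * κ + d) := by
  rw [Finset.card_union_of_disjoint (aux_disjBX B κ d),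
    Finset.card_image_of_injective _ Sum.inl_injective, aux_Xcard]

private lemma aux_vrcard (Ed : Finset (β × β)) (B : Finset β) (r : β) :
    ((nbrR Ed r).image (Sum.inl : β → Cand β) ∪ CrSet B r).card
      = (nbrR Ed r).card + (B.card + 2) := by
  rw [Finset.card_union_of_disjoint, Finset.card_image_of_injective _ Sum.inl_injective,
    aux_Crcard]
  simp only [Finset.disjoint_left, Finset.mem_image, CrSet]
  rintro a ⟨b, _, rfl⟩ h
  simp at h

/-- correctness of the reduction from Red-Blue Dominating Set to
Nonwinning Testing for MAV. -/
theorem nonwinning_mav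
    (R B : Finset β) (hRB : Disjoint R B) (Ed : Finset (β × β))
    (hEd : ∀ e ∈ Ed, e.1 ∈ R ∧ e.2 ∈ B)
    (d : ℕ) (hd : 1 ≤ d)
    (hdegR : ∀ r ∈ R, (nbrR Ed r).card = d)
    (hnoisoB : ∀ b ∈ B, (nbrB Ed b).Nonempty)
    (κ : ℕ) (hκ1 : 1 ≤ κ) (hκ2 : κ ≤ B.card) :
    (∃ B' ⊆ B, B'.card = κ ∧ ∀ r ∈ R, ∃ b ∈ B', (r, b) ∈ Ed) ↔
      (∀ w ∈ mavWinners (Ctot R B κ d) (votes Ed R B κ d) κ, pc ∉ w) := by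
  classical
  have hinjl : Function.Injective (Sum.inl : β → Cand β) := Sum.inl_injective
  have hv0mem : (B.image (Sum.inl : β → Cand β) ∪ Xset κ d) ∈ votes Ed R B κ d := by
    rw [votes]; exact Multiset.mem_cons_self _ _
  have hvrmem : ∀ r ∈ R,
      ((nbrR Ed r).image (Sum.inl : β → Cand β) ∪ CrSet B r) ∈ votes Ed R B κ d := by
    intro r hr
    rw [votes]
    exact Multiset.mem_cons_of_mem (Multiset.mem_map_of_mem _ (by simpa using hr))
  have hle : ∀ (w v : Finset (Cand β)), v ∈ votes Ed R B κ d →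
      (w \ v).card + (v \ w).card ≤ mavScore (votes Ed R B κ d) w := by
    intro w v hv
    exact Multiset.le_sup (Multiset.mem_map_of_mem _ hv)
  have hsup : ∀ (w : Finset (Cand β)) (n : ℕ),
      ((w \ (B.image Sum.inl ∪ Xset κ d)).card
        + ((B.image Sum.inl ∪ Xset κ d) \ w).card ≤ n) →
      (∀ r ∈ R, (w \ ((nbrR Ed r).image Sum.inl ∪ CrSet B r)).card
        + (((nbrR Ed r).image Sum.inl ∪ CrSet B r) \ w).card ≤ n) →
      mavScore (votes Ed R B κ d) w ≤ n := by
    intro w n h0 hr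
    unfold mavScore
    rw [Multiset.sup_le]
    intro a ha
    obtain ⟨v, hv, rfl⟩ := Multiset.mem_map.1 ha
    rw [votes, Multiset.mem_cons] at hv
    rcases hv with rfl | hv
    · exact h0
    · obtain ⟨r, hrm, rfl⟩ := Multiset.mem_map.1 hv
      exact hr r (by simpa using hrm)
  have hsubv0 : ∀ w : Finset (Cand β), w.card = κ →
      (w \ (B.image Sum.inl ∪ Xset κ d)).card
        + ((B.image Sum.inl ∪ Xset κ d) \ w).card ≤ B.card + d + κ + 1 →
      w ⊆ B.image Sum.inl ∪ Xset κ d := by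
    intro w hwc hlew
    have hid := dist_identity w (B.image Sum.inl ∪ Xset κ d)
    have hv0c := aux_v0card B κ d
    have hxle : (w ∩ (B.image Sum.inl ∪ Xset κ d)).card ≤ w.card :=
      Finset.card_le_card Finset.inter_subset_left
    have : w ∩ (B.image Sum.inl ∪ Xset κ d) = w :=
      Finset.eq_of_subset_of_card_le Finset.inter_subset_left (by omega)
    exact Finset.inter_eq_left.1 this
  constructor
  · rintro ⟨B', hB'B, hB'c, hdom⟩ w hw
    rw [mavWinners, Finset.mem_filter, Finset.mem_powersetCard] at hw
    obtain ⟨⟨hwC, hwc⟩, hmin⟩ := hw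
    have hw0sub : B'.image (Sum.inl : β → Cand β) ⊆ B.image Sum.inl ∪ Xset κ d := by
      intro c hc
      obtain ⟨b, hb, rfl⟩ := Finset.mem_image.1 hc
      exact Finset.mem_union_left _ (Finset.mem_image_of_mem _ (hB'B hb))
    have hw0c : (B'.image (Sum.inl : β → Cand β)).card = κ := by
      rw [Finset.card_image_of_injective _ hinjl, hB'c]
    have hw0pc : B'.image (Sum.inl : β → Cand β) ∈ (Ctot R B κ d).powersetCard κ := by
      rw [Finset.mem_powersetCard]
      refine ⟨?_, hw0c⟩
      intro c hc
      obtain ⟨b, hb, rfl⟩ := Finset.mem_image.1 hc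
      rw [Ctot]
      exact Finset.mem_insert_of_mem (Finset.mem_union_left _
        (Finset.mem_union_left _ (Finset.mem_image_of_mem _ (hB'B hb))))
    have hscore0 : mavScore (votes Ed R B κ d) (B'.image Sum.inl) ≤ B.card + d + κ := by
      apply hsup
      · have h1 : B'.image (Sum.inl : β → Cand β) \ (B.image Sum.inl ∪ Xset κ d) = ∅ :=
          Finset.sdiff_eq_empty_iff_subset.2 hw0sub
        have h2 := Finset.card_sdiff_of_subset hw0sub
        have hv0c := aux_v0card B κ d
        rw [h1]
        simp only [Finset.card_empty]
        omega
      · intro r hr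
        obtain ⟨b, hbB', hrb⟩ := hdom r hr
        have hbv : (Sum.inl b : Cand β) ∈ (nbrR Ed r).image Sum.inl ∪ CrSet B r := by
          refine Finset.mem_union_left _ (Finset.mem_image_of_mem _ ?_)
          rw [nbrR]
          exact Finset.mem_image.2 ⟨(r, b), Finset.mem_filter.2 ⟨hrb, rfl⟩, rfl⟩
        have hbw : (Sum.inl b : Cand β) ∈ B'.image Sum.inl := Finset.mem_image_of_mem _ hbB'
        have h1 : B'.image (Sum.inl : β → Cand β) \ ((nbrR Ed r).image Sum.inl ∪ CrSet B r)
            ⊆ (B'.image Sum.inl).erase (Sum.inl b) := by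
          intro c hc
          rw [Finset.mem_sdiff] at hc
          exact Finset.mem_erase.2 ⟨fun h => hc.2 (h ▸ hbv), hc.1⟩
        have h2 : ((nbrR Ed r).image (Sum.inl : β → Cand β) ∪ CrSet B r) \ B'.image Sum.inl
            ⊆ ((nbrR Ed r).image Sum.inl ∪ CrSet B r).erase (Sum.inl b) := by
          intro c hc
          rw [Finset.mem_sdiff] at hc
          exact Finset.mem_erase.2 ⟨fun h => hc.2 (h ▸ hbw), hc.1⟩
        have h1c := Finset.card_le_card h1
        have h2c := Finset.card_le_card h2
        rw [Finset.card_erase_of_mem hbw, hw0c] at h1c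
        rw [Finset.card_erase_of_mem hbv, aux_vrcard, hdegR r hr] at h2c
        omega
    have hwin := hmin _ hw0pc
    have hterm := hle w _ hv0mem
    have hwsub : w ⊆ B.image Sum.inl ∪ Xset κ d := hsubv0 w hwc (by omega)
    intro hpw
    exact aux_pc_notmem B κ d (hwsub hpw)
  · intro hall
    obtain ⟨X', hX'X, hX'c⟩ :=
      Finset.exists_subset_card_eq (s := (Xset κ d : Finset (Cand β))) (n := κ - 1)
        (by rw [aux_Xcard]; omega)
    have hpcX' : (pc : Cand β) ∉ X' := fun h =>
      aux_pc_notmem B κ d (Finset.mem_union_right _ (hX'X h))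
    have hwpc : (insert (pc : Cand β) X').card = κ := by
      rw [Finset.card_insert_of_notMem hpcX', hX'c]; omega
    have hwpC : insert (pc : Cand β) X' ∈ (Ctot R B κ d).powersetCard κ := by
      rw [Finset.mem_powersetCard]
      refine ⟨?_, hwpc⟩
      intro c hc
      rcases Finset.mem_insert.1 hc with rfl | hc
      · rw [Ctot]; exact Finset.mem_insert_self _ _
      · rw [Ctot]; exact Finset.mem_insert_of_mem (Finset.mem_union_right _ (hX'X hc))
    have hwps : mavScore (votes Ed R B κ d) (insert pc X') ≤ B.card + d + κ + 2 := by
      apply hsup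
      · have h1 : insert (pc : Cand β) X' \ (B.image Sum.inl ∪ Xset κ d) ⊆ {pc} := by
          intro c hc
          rw [Finset.mem_sdiff] at hc
          rcases Finset.mem_insert.1 hc.1 with rfl | hcX
          · exact Finset.mem_singleton_self _
          · exact absurd (Finset.mem_union_right _ (hX'X hcX)) hc.2
        have h2 : (B.image (Sum.inl : β → Cand β) ∪ Xset κ d) \ insert pc X'
            ⊆ (B.image Sum.inl ∪ Xset κ d) \ X' :=
          Finset.sdiff_subset_sdiff (le_refl _) (Finset.subset_insert _ _)
        have h2c : ((B.image (Sum.inl : β → Cand β) ∪ Xset κ d) \ X').card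
            = (B.image (Sum.inl : β → Cand β) ∪ Xset κ d).card - X'.card :=
          Finset.card_sdiff_of_subset (fun c hc => Finset.mem_union_right _ (hX'X hc))
        have h1c := Finset.card_le_card h1
        have h2c' := Finset.card_le_card h2
        have hv0c := aux_v0card B κ d
        rw [Finset.card_singleton] at h1c
        omega
      · intro r hr
        have h1 : (insert (pc : Cand β) X'
            \ ((nbrR Ed r).image Sum.inl ∪ CrSet B r)).card ≤ κ :=
          le_trans (Finset.card_le_card Finset.sdiff_subset) (le_of_eq hwpc)
        have h2 : (((nbrR Ed r).image (Sum.inl : β → Cand β) ∪ CrSet B r)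
            \ insert pc X').card ≤ d + (B.card + 2) := by
          refine le_trans (Finset.card_le_card Finset.sdiff_subset) ?_
          rw [aux_vrcard, hdegR r hr]
        omega
    have hnw : insert (pc : Cand β) X'
        ∉ mavWinners (Ctot R B κ d) (votes Ed R B κ d) κ := fun h =>
      hall _ h (Finset.mem_insert_self _ _)
    rw [mavWinners, Finset.mem_filter] at hnw
    push_neg at hnw
    obtain ⟨w', hw'pc, hlt⟩ := hnw hwpC
    rw [Finset.mem_powersetCard] at hw'pc
    obtain ⟨hw'C, hw'c⟩ := hw'pc
    have hsmall : mavScore (votes Ed R B κ d) w' ≤ B.card + d + κ + 1 := by omega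
    have hw'v0 : w' ⊆ B.image Sum.inl ∪ Xset κ d := by
      refine hsubv0 w' hw'c ?_
      have := hle w' _ hv0mem
      omega
    have hB0B : B.filter (fun b => (Sum.inl b : Cand β) ∈ w') ⊆ B :=
      Finset.filter_subset _ _
    have hB0c : (B.filter (fun b => (Sum.inl b : Cand β) ∈ w')).card ≤ κ := by
      have hsub : (B.filter (fun b => (Sum.inl b : Cand β) ∈ w')).image Sum.inl ⊆ w' := by
        intro c hc
        obtain ⟨b, hb, rfl⟩ := Finset.mem_image.1 hc
        exact (Finset.mem_filter.1 hb).2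
      calc (B.filter (fun b => (Sum.inl b : Cand β) ∈ w')).card
          = ((B.filter (fun b => (Sum.inl b : Cand β) ∈ w')).image Sum.inl).card :=
            (Finset.card_image_of_injective _ hinjl).symm
        _ ≤ w'.card := Finset.card_le_card hsub
        _ = κ := hw'c
    obtain ⟨B', hB0B', hB'B, hB'c⟩ := Finset.exists_subsuperset_card_eq hB0B hB0c hκ2
    refine ⟨B', hB'B, hB'c, ?_⟩
    intro r hr
    have hterm := le_trans (hle w' _ (hvrmem r hr)) hsmall
    have hy : 1 ≤ (w' ∩ ((nbrR Ed r).image Sum.inl ∪ CrSet B r)).card := by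
      have hid := dist_identity w' ((nbrR Ed r).image Sum.inl ∪ CrSet B r)
      have hvrc := aux_vrcard Ed B r
      rw [hdegR r hr] at hvrc
      omega
    obtain ⟨c, hc⟩ := Finset.card_pos.1 hy
    rw [Finset.mem_inter] at hc
    have hcw' := hw'v0 hc.1
    rcases Finset.mem_union.1 hcw' with hcB | hcX
    · obtain ⟨b, hbB, rfl⟩ := Finset.mem_image.1 hcB
      rcases Finset.mem_union.1 hc.2 with hn | hcr
      · obtain ⟨b', hb', heq⟩ := Finset.mem_image.1 hn
        obtain rfl := hinjl heq
        rw [nbrR] at hb'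
        obtain ⟨e, he, hsnd⟩ := Finset.mem_image.1 hb'
        rw [Finset.mem_filter] at he
        have heq2 : e = (r, b') := by
          obtain ⟨e1, e2⟩ := e
          simp_all
        refine ⟨b', hB0B' ?_, heq2 ▸ he.1⟩
        exact Finset.mem_filter.2 ⟨hbB, hc.1⟩
      · rw [CrSet] at hcr
        obtain ⟨i, _, h⟩ := Finset.mem_image.1 hcr
        exact absurd h (by simp)
    · rw [Xset] at hcX
      obtain ⟨j, _, rfl⟩ := Finset.mem_image.1 hcX
      rcases Finset.mem_union.1 hc.2 with hn | hcr
      · obtain ⟨b', _, h⟩ := Finset.mem_image.1 hn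
        exact absurd h (by simp)
      · rw [CrSet] at hcr
        obtain ⟨i, _, h⟩ := Finset.mem_image.1 hcr
        exact absurd h (by simp)

end Stmt10
end

section
/- Let φ be an ABMV rule that is α-efficient and neutral. Let G = (R ∪ B, E) be a bipartite graph with parts R (nonempty) and B, and let κ be an integer with 0 ≤ κ ≤ |B|. Let C = R ∪ {p} with p a fresh candidate, let k = |R|, and for each b ∈ B let v(b) = N_G(b) ⊆ R. Then there exists B' ⊆ B with |B'| ≤ κ dominating R if and only if there exists B' ⊆ B with |B'| ≤ κ such that p is not contained in any winning k-committee of φ at the election (C, {v(b) : b ∈ B'}). -/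
open Finset

attribute [local instance] Classical.propDecidable

universe u

variable {α : Type u}

/-- correctness of the reduction from Red-Blue Dominating Set to
destructive control by adding voters, for every ABMV rule that is α-efficient and
neutral.  Red vertices are candidates (members of `R`); blue vertices form the finset
`B` of a type `δ`, the neighborhood of a blue vertex `b` being `nb b ⊆ R`. -/
theorem dcav_alpha_efficient_neutral {γ : Type u} {δ : Type*} [DecidableEq γ]
    (φ : Finset γ → Multiset (Finset γ) → ℕ → Finset (Finset γ))
    (hrule : ∀ (C : Finset γ) (V : Multiset (Finset γ)) (k : ℕ), k ≤ C.card →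
      (φ C V k).Nonempty ∧ ∀ w ∈ φ C V k, w ⊆ C ∧ w.card = k)
    (heff : ∀ (C : Finset γ) (V : Multiset (Finset γ)) (k : ℕ),
      (C.filter fun c => ∀ v ∈ V, c ∉ v).Nonempty →
      k ≤ (C \ C.filter fun c => ∀ v ∈ V, c ∉ v).card →
      ∀ w ∈ φ C V k, ∀ c ∈ C.filter fun c => ∀ v ∈ V, c ∉ v, c ∉ w)
    (hneutral : ∀ (C : Finset γ) (V : Multiset (Finset γ)) (k : ℕ) (f : γ ≃ γ),
      k ≤ C.card → C.image f = C →
      ∀ w : Finset γ, w ∈ φ C V k ↔ w.image f ∈ φ C (V.map (Finset.image f)) k)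
    (R : Finset γ) (hR : R.Nonempty) (p : γ) (hp : p ∉ R)
    (B : Finset δ) (nb : δ → Finset γ) (hnb : ∀ b ∈ B, nb b ⊆ R)
    (κ : ℕ) (hκ : κ ≤ B.card) :
    (∃ B' ⊆ B, B'.card ≤ κ ∧ ∀ r ∈ R, ∃ b ∈ B', r ∈ nb b) ↔
      (∃ B' ⊆ B, B'.card ≤ κ ∧
        ∀ w ∈ φ (insert p R) (B'.val.map nb) R.card, p ∉ w) := by
  constructor
  · rintro ⟨B', hB'B, hcard, hdom⟩
    refine ⟨B', hB'B, hcard, ?_⟩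
    intro w hw
    set C := insert p R with hC
    set V := B'.val.map nb with hV
    have hpC0 : p ∈ C.filter fun c => ∀ v ∈ V, c ∉ v := by
      simp only [mem_filter]
      refine ⟨mem_insert_self _ _, ?_⟩
      intro v hv
      obtain ⟨b, hb, rfl⟩ := Multiset.mem_map.mp hv
      intro hpv
      exact hp (hnb b (hB'B hb) hpv)
    have hsub : R ⊆ C \ (C.filter fun c => ∀ v ∈ V, c ∉ v) := by
      intro r hr
      rw [mem_sdiff]
      refine ⟨mem_insert_of_mem hr, ?_⟩
      simp only [mem_filter, not_and, not_forall]
      intro _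
      obtain ⟨b, hb, hrb⟩ := hdom r hr
      exact ⟨nb b, Multiset.mem_map_of_mem nb hb, by simpa using hrb⟩
    exact heff C V R.card ⟨p, hpC0⟩ (card_le_card hsub) w hw p hpC0
  · rintro ⟨B', hB'B, hcard, hwin⟩
    refine ⟨B', hB'B, hcard, ?_⟩
    by_contra hnot
    push_neg at hnot
    obtain ⟨r, hrR, hrdom⟩ := hnot
    set C := insert p R with hC
    set V := B'.val.map nb with hV
    set f := Equiv.swap p r with hf
    have hk : R.card ≤ C.card := card_le_card (subset_insert _ _)
    obtain ⟨w, hw⟩ := (hrule C V R.card hk).1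
    have hwprop := (hrule C V R.card hk).2 w hw
    have hpw : p ∉ w := hwin w hw
    have hwR : w = R := by
      apply eq_of_subset_of_card_le
      · intro x hx
        rcases mem_insert.mp (hwprop.1 hx) with rfl | h
        · exact absurd hx hpw
        · exact h
      · rw [hwprop.2]
    have hCim : C.image f = C := by
      apply eq_of_subset_of_card_le
      · intro x hx
        obtain ⟨y, hy, rfl⟩ := mem_image.mp hx
        rcases mem_insert.mp hy with rfl | hyR
        · rw [hf, Equiv.swap_apply_left]
          exact mem_insert_of_mem hrR
        · by_cases hyr : y = r
          · subst hyr
            rw [hf, Equiv.swap_apply_right]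
            exact mem_insert_self _ _
          · rw [hf, Equiv.swap_apply_of_ne_of_ne (by rintro rfl; exact hp hyR) hyr]
            exact mem_insert_of_mem hyR
      · rw [card_image_of_injective _ f.injective]
    have hVim : V.map (Finset.image f) = V := by
      have hfix : ∀ v ∈ V, Finset.image f v = v := by
        intro v hv
        obtain ⟨b, hb, rfl⟩ := Multiset.mem_map.mp hv
        have h1 : ∀ x ∈ nb b, f x = x := by
          intro x hx
          apply Equiv.swap_apply_of_ne_of_ne
          · rintro rfl; exact hp (hnb b (hB'B hb) hx)
          · rintro rfl; exact hrdom b hb hx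
        calc Finset.image f (nb b) = Finset.image id (nb b) :=
              Finset.image_congr (fun x hx => h1 x hx)
          _ = nb b := Finset.image_id
      calc V.map (Finset.image f) = V.map id := Multiset.map_congr rfl hfix
        _ = V := Multiset.map_id V
    have hw2 := (hneutral C V R.card f hk hCim w).mp hw
    rw [hVim] at hw2
    have hpw' : p ∈ w.image f := by
      rw [hwR]
      exact mem_image.mpr ⟨r, hrR, Equiv.swap_apply_right p r⟩
    exact hwin _ hw2 hpw'
end
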